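/- Let G = (V, E) be an undirected multigraph and T ⊆ V a set of terminals. Let pq be an arbitrary edge of G with both endpoints p, q ∈ V \ T, let G₁ = G − pq be the graph obtained by deleting the edge pq, and let G₂ = G/pq be the multigraph obtained by contracting the edge pq (identifying p and q into a single non-terminal vertex, keeping all other edges, possibly creating parallel edges). Then at least one of the following holds: (1) κ'_{(G₁,T)}(u,v) = κ'_{(G,T)}(u,v) for all distinct u, v ∈ T; or (2) κ'_{(G₂,T)}(u,v) = κ'_{(G,T)}(u,v) for all distinct u, v ∈ T. -/
import Mathlib


/-!
The Chekuri–Korula element-connectivity preserving reduction theorem: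
for any edge `pq` between two non-terminals, deleting `pq` or contracting `pq`
preserves all pairwise element-connectivities between terminals.

A multigraph on `V` is a finite multiset `E : Multiset (Sym2 V)` of unordered
pairs of distinct vertices.
-/

attribute [local instance] Classical.propDecidable

noncomputable section

/-- One adjacency step in the multigraph `E`, avoiding the deleted vertex set `Fv`. -/
def Adj {V : Type*} (E : Multiset (Sym2 V)) (Fv : Set V) (a b : V) : Prop :=
  s(a, b) ∈ E ∧ a ∉ Fv ∧ b ∉ Fv

/-- `u` and `v` lie in the same connected component of `E` after deleting the
vertices in `Fv`. -/
def Connects {V : Type*} (E : Multiset (Sym2 V)) (Fv : Set V) (u v : V) : Prop :=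
  Relation.ReflTransGen (Adj E Fv) u v

/-- Element-connectivity `κ'_{(G,T)}(u,v)`: the minimum cardinality of a set
`F = Fv ∪ Fe` of non-terminal vertices and edges whose deletion disconnects
`u` from `v`. -/
def elemConn {V : Type*} (E : Multiset (Sym2 V)) (T : Set V) (u v : V) : ℕ :=
  sInf {n | ∃ (Fv : Finset V) (Fe : Multiset (Sym2 V)), (↑Fv : Set V) ⊆ Tᶜ ∧ Fe ≤ E ∧
    n = Fv.card + Multiset.card Fe ∧ ¬ Connects (E - Fe) (↑Fv) u v}

/-- The map identifying `q` with `p`. -/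
def collapse {V : Type*} [DecidableEq V] (p q : V) : V → V :=
  fun x => if x = q then p else x

/-- Contraction of the edge `pq`: identify `p` and `q` (into `p`), keep all the other
edges (parallel edges may arise; copies of `pq` become loops and are discarded). -/
def contractE {V : Type*} [DecidableEq V] (E : Multiset (Sym2 V)) (p q : V) :
    Multiset (Sym2 V) :=
  (E.map (Sym2.map (collapse p q))).filter (fun e => ¬ e.IsDiag)

namespace CK

set_option linter.unusedSectionVars false

lemma sub_inst_congr {α : Type*} (i1 i2 : DecidableEq α) (s t : Multiset α) :
    @HSub.hSub _ _ _ (@instHSub _ (@Multiset.instSub α i1)) s t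
      = @HSub.hSub _ _ _ (@instHSub _ (@Multiset.instSub α i2)) s t := by
  have h : i1 = i2 := by
    funext a b
    exact Subsingleton.elim _ _
  subst h; rfl


lemma decEq_eq {α : Type*} (i1 i2 : DecidableEq α) : i1 = i2 := by
  funext a b
  exact Subsingleton.elim _ _

lemma connects_sub_indep {V' : Type*} (i1 i2 : DecidableEq (Sym2 V'))
    (E Fe : Multiset (Sym2 V')) (Fv : Set V') (u v : V') :
    Connects (@HSub.hSub _ _ _ (@instHSub _ (@Multiset.instSub _ i1)) E Fe) Fv u v ↔
    Connects (@HSub.hSub _ _ _ (@instHSub _ (@Multiset.instSub _ i2)) E Fe) Fv u v := by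
  have h : i1 = i2 := decEq_eq i1 i2
  subst h; exact Iff.rfl

lemma notMem_sub_self {α : Type*} (i : DecidableEq α) (s : Multiset α) (e : α) :
    e ∉ @HSub.hSub _ _ _ (@instHSub _ (@Multiset.instSub _ i)) s s := fun h =>
  lt_irrefl _ ((@Multiset.mem_sub α i e s s).1 h)

lemma not_connects_of_no_edges {V' : Type*} {X : Multiset (Sym2 V')} (h : ∀ e, e ∉ X)
    (Fv : Set V') {u v : V'} (hne : u ≠ v) : ¬ Connects X Fv u v := by
  intro hc
  rcases hc.cases_tail with h' | ⟨c, _, hadj⟩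
  · exact hne h'.symm
  · exact h _ hadj.1

variable {V : Type*} [Fintype V] [DecidableEq V]

/-- `w` has a neighbour in `A`. -/
def adjS (E : Multiset (Sym2 V)) (A : Finset V) (w : V) : Prop :=
  ∃ a ∈ A, s(a, w) ∈ E

/-- non-terminal boundary of `A`. -/
def bdry (E : Multiset (Sym2 V)) (T : Set V) (A : Finset V) : Finset V :=
  Finset.univ.filter (fun w => w ∉ A ∧ w ∉ T ∧ adjS E A w)

/-- `e` crosses from `A` to a terminal outside `A`. -/
def crossP (T : Set V) (A : Finset V) (e : Sym2 V) : Prop :=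
  ∃ a b : V, e = s(a, b) ∧ a ∈ A ∧ b ∈ T ∧ b ∉ A

/-- instance-fixed countP. -/
def cnt {α : Type*} (p : α → Prop) (s : Multiset α) : ℕ :=
  @Multiset.countP α p (fun a => Classical.propDecidable _) s

lemma cnt_zero {α : Type*} (p : α → Prop) : cnt p 0 = 0 := rfl

lemma cnt_cons {α : Type*} (p : α → Prop) (a : α) (s : Multiset α) :
    cnt p (a ::ₘ s) = cnt p s + if p a then 1 else 0 := by
  unfold cnt
  rw [Multiset.countP_cons]

/-- instance-fixed filter. -/
def flt {α : Type*} (p : α → Prop) (s : Multiset α) : Multiset α :=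
  @Multiset.filter α p (fun a => Classical.propDecidable _) s

lemma mem_flt {α : Type*} {p : α → Prop} {s : Multiset α} {e : α} :
    e ∈ flt p s ↔ e ∈ s ∧ p e := by
  unfold flt
  exact Multiset.mem_filter

lemma flt_le {α : Type*} (p : α → Prop) (s : Multiset α) : flt p s ≤ s :=
  Multiset.filter_le _ _

lemma count_flt {α : Type*} [DecidableEq α] (p : α → Prop) (s : Multiset α) (e : α) :
    Multiset.count e (flt p s) = if p e then Multiset.count e s else 0 := by
  unfold flt
  rw [Multiset.count_filter]

lemma cnt_eq_card_flt {α : Type*} (p : α → Prop) (s : Multiset α) :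
    cnt p s = Multiset.card (flt p s) := by
  unfold cnt flt
  rw [Multiset.countP_eq_card_filter]

/-- cost of the canonical cut determined by `A`. -/
def fE (E : Multiset (Sym2 V)) (T : Set V) (A : Finset V) : ℕ :=
  (bdry E T A).card + cnt (crossP T A) E

lemma mem_bdry {E : Multiset (Sym2 V)} {T : Set V} {A : Finset V} {w : V} :
    w ∈ bdry E T A ↔ w ∉ A ∧ w ∉ T ∧ adjS E A w := by
  simp [bdry]

lemma crossP_pair {T : Set V} {A : Finset V} {a b : V} :
    crossP T A s(a, b) ↔ (a ∈ A ∧ b ∈ T ∧ b ∉ A) ∨ (b ∈ A ∧ a ∈ T ∧ a ∉ A) := by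
  constructor
  · rintro ⟨x, y, hxy, hx, hy1, hy2⟩
    rcases Sym2.eq_iff.1 hxy with ⟨rfl, rfl⟩ | ⟨rfl, rfl⟩
    · exact Or.inl ⟨hx, hy1, hy2⟩
    · exact Or.inr ⟨hx, hy1, hy2⟩
  · rintro (⟨h1, h2, h3⟩ | ⟨h1, h2, h3⟩)
    · exact ⟨a, b, rfl, h1, h2, h3⟩
    · exact ⟨b, a, Sym2.eq_swap, h1, h2, h3⟩

lemma cnt_or_eq {α : Type*} (s : Multiset α) (p q : α → Prop)
    (h : ∀ e ∈ s, ¬(p e ∧ q e)) :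
    cnt (fun e => p e ∨ q e) s = cnt p s + cnt q s := by
  induction s using Multiset.induction_on with
  | empty => simp [cnt_zero]
  | cons a s ih =>
    have ha := h a (Multiset.mem_cons_self a s)
    have hrec := ih (fun e he => h e (Multiset.mem_cons_of_mem he))
    rw [cnt_cons, cnt_cons, cnt_cons, hrec]
    by_cases hp : p a
    · have hq : ¬ q a := fun hq => ha ⟨hp, hq⟩
      simp [hp, hq]; omega
    · by_cases hq : q a <;> simp [hp, hq] <;> omega

lemma cnt_le_of_imp {α : Type*} (s : Multiset α) (p q : α → Prop)
    (h : ∀ e ∈ s, p e → q e) :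
    cnt p s ≤ cnt q s := by
  induction s using Multiset.induction_on with
  | empty => simp [cnt_zero]
  | cons a s ih =>
    have ha := h a (Multiset.mem_cons_self a s)
    have hrec := ih (fun e he => h e (Multiset.mem_cons_of_mem he))
    rw [cnt_cons, cnt_cons]
    by_cases hp : p a
    · simp [hp, ha hp]; omega
    · by_cases hq : q a <;> simp [hp, hq] <;> omega

lemma cnt_eq_of_iff {α : Type*} (s : Multiset α) (p q : α → Prop)
    (h : ∀ e ∈ s, p e ↔ q e) :
    cnt p s = cnt q s :=
  le_antisymm (cnt_le_of_imp s p q (fun e he => (h e he).1))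
    (cnt_le_of_imp s q p (fun e he => (h e he).2))

lemma cnt_submod {α : Type*} (s : Multiset α) (pu pi pa pb : α → Prop)
    (h1 : ∀ e ∈ s, pu e → pi e → pa e ∧ pb e)
    (h2 : ∀ e ∈ s, pu e → pa e ∨ pb e)
    (h3 : ∀ e ∈ s, pi e → pa e ∨ pb e) :
    cnt pu s + cnt pi s ≤ cnt pa s + cnt pb s := by
  induction s using Multiset.induction_on with
  | empty => simp [cnt_zero]
  | cons a s ih =>
    have g1 := h1 a (Multiset.mem_cons_self a s)
    have g2 := h2 a (Multiset.mem_cons_self a s)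
    have g3 := h3 a (Multiset.mem_cons_self a s)
    have hrec := ih (fun e he => h1 e (Multiset.mem_cons_of_mem he))
      (fun e he => h2 e (Multiset.mem_cons_of_mem he))
      (fun e he => h3 e (Multiset.mem_cons_of_mem he))
    rw [cnt_cons, cnt_cons, cnt_cons, cnt_cons]
    by_cases hu : pu a <;> by_cases hi : pi a <;> by_cases hpa : pa a <;> by_cases hpb : pb a <;>
      simp [hu, hi, hpa, hpb] <;> first | omega | tauto

lemma cnt_le_card {α : Type*} [DecidableEq α] (s t : Multiset α) (p : α → Prop)
    (h : ∀ e ∈ s, p e → Multiset.count e s ≤ Multiset.count e t) :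
    cnt p s ≤ Multiset.card t := by
  rw [cnt_eq_card_flt]
  refine Multiset.card_le_card (le_trans ?_ le_rfl)
  rw [Multiset.le_iff_count]
  intro e
  rw [count_flt]
  by_cases hp : p e
  · rw [if_pos hp]
    by_cases he : e ∈ s
    · exact h e he hp
    · rw [Multiset.count_eq_zero_of_notMem he]
      omega
  · rw [if_neg hp]
    omega

lemma connects_mem {V' : Type*} {E' : Multiset (Sym2 V')} {Fv : Set V'} {A : Finset V'}
    {u z : V'} (hu : u ∈ A) (hstep : ∀ b c, b ∈ A → Adj E' Fv b c → c ∈ A)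
    (h : Connects E' Fv u z) : z ∈ A := by
  induction h with
  | refl => exact hu
  | tail hbz hadj ih => exact hstep _ _ ih hadj

lemma notMem_sub_flt {α : Type*} [DecidableEq α] (s : Multiset α) (P : α → Prop)
    (e : α) (hP : P e) : e ∉ s - flt P s := by
  intro hmem
  have hpos : 0 < Multiset.count e (s - flt P s) := Multiset.count_pos.2 hmem
  rw [Multiset.count_sub, count_flt, if_pos hP] at hpos
  omega

/-- L1: `elemConn` is at most the cost of any canonical cut. -/
lemma elemConn_le_fE (E : Multiset (Sym2 V)) (T : Set V) {u v : V}
    (A : Finset V) (hu : u ∈ A) (hv : v ∉ A) :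
    elemConn E T u v ≤ fE E T A := by
  apply Nat.sInf_le
  refine ⟨bdry E T A, flt (crossP T A) E, ?_, flt_le _ _, ?_, ?_⟩
  · intro w hw
    have := (mem_bdry (w := w)).1 (by exact_mod_cast hw)
    exact this.2.1
  · rw [fE, cnt_eq_card_flt]
  · intro hcon
    have hcon2 : Connects (E - flt (crossP T A) E) (↑(bdry E T A)) u v :=
      (connects_sub_indep _ _ _ _ _ _ _).1 hcon
    refine hv (connects_mem hu ?_ hcon2)
    intro b c hb hadj
    obtain ⟨hmem, hbv, hcv⟩ := hadj
    by_contra hcA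
    by_cases hcT : c ∈ T
    · exact notMem_sub_flt E (crossP T A) s(b, c) ⟨b, c, rfl, hb, hcT, hcA⟩ hmem
    · refine hcv ?_
      have hEm : s(b, c) ∈ E := Multiset.mem_of_le tsub_le_self hmem
      exact_mod_cast (mem_bdry (w := c)).2 ⟨hcA, hcT, ⟨b, hb, hEm⟩⟩

lemma connects_symm {V' : Type*} {E : Multiset (Sym2 V')} {Fv : Set V'} {u v : V'}
    (h : Connects E Fv u v) : Connects E Fv v u := by
  induction h with
  | refl => exact Relation.ReflTransGen.refl
  | tail hbz hadj ih =>
    rename_i b c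
    refine Relation.ReflTransGen.head ?_ ih
    obtain ⟨h1, h2, h3⟩ := hadj
    exact ⟨Sym2.eq_swap ▸ h1, h3, h2⟩

lemma elemConn_comm {V' : Type*} (E : Multiset (Sym2 V')) (T : Set V') (u v : V') :
    elemConn E T u v = elemConn E T v u := by
  unfold elemConn
  congr 1
  ext n
  constructor <;> rintro ⟨Fv, Fe, h1, h2, h3, h4⟩ <;>
    exact ⟨Fv, Fe, h1, h2, h3, fun hcon => h4 (connects_symm hcon)⟩

lemma elemConn_eq_sInf (E : Multiset (Sym2 V)) (T : Set V) (u v : V) :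
    elemConn E T u v = sInf {n | ∃ (Fv : Finset V) (Fe : Multiset (Sym2 V)),
      (↑Fv : Set V) ⊆ Tᶜ ∧ Fe ≤ E ∧ n = Fv.card + Multiset.card Fe ∧
      ¬ Connects (E - Fe) (↑Fv) u v} := by
  unfold elemConn
  congr 1
  ext n
  constructor <;> rintro ⟨Fv, Fe, a1, a2, a3, a4⟩ <;>
    exact ⟨Fv, Fe, a1, a2, a3, fun hx => a4 ((connects_sub_indep _ _ _ _ _ _ _).1 hx)⟩

lemma elemConn_spec (E : Multiset (Sym2 V)) (T : Set V) (u v : V) (hne : u ≠ v) :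
    ∃ (Fv : Finset V) (Fe : Multiset (Sym2 V)), (↑Fv : Set V) ⊆ Tᶜ ∧ Fe ≤ E ∧
      elemConn E T u v = Fv.card + Multiset.card Fe ∧
      ¬ Connects (E - Fe) (↑Fv) u v := by
  have h := elemConn_eq_sInf E T u v
  have hmem : sInf {n | ∃ (Fv : Finset V) (Fe : Multiset (Sym2 V)),
      (↑Fv : Set V) ⊆ Tᶜ ∧ Fe ≤ E ∧ n = Fv.card + Multiset.card Fe ∧
      ¬ Connects (E - Fe) (↑Fv) u v} ∈ {n | ∃ (Fv : Finset V) (Fe : Multiset (Sym2 V)),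
      (↑Fv : Set V) ⊆ Tᶜ ∧ Fe ≤ E ∧ n = Fv.card + Multiset.card Fe ∧
      ¬ Connects (E - Fe) (↑Fv) u v} :=
    Nat.sInf_mem ⟨Multiset.card E, ∅, E, by simp, le_rfl, by simp,
      not_connects_of_no_edges (fun e he => notMem_sub_self _ E e he) _ hne⟩
  rw [h]
  exact hmem

lemma exists_fE_le (E : Multiset (Sym2 V)) (T : Set V) {u v : V}
    (Fv : Finset V) (Fe : Multiset (Sym2 V)) (hFv : (↑Fv : Set V) ⊆ Tᶜ) (hFe : Fe ≤ E)
    (hu : u ∉ Fv)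
    (hdis : ¬ Connects (E - Fe) (↑Fv) u v) :
    ∃ A : Finset V, u ∈ A ∧ v ∉ A ∧ fE E T A ≤ Fv.card + Multiset.card Fe := by
  set A : Finset V := Finset.univ.filter (fun z => Connects (E - Fe) (↑Fv) u z) with hAdef
  have hmemA : ∀ z, z ∈ A ↔ Connects (E - Fe) (↑Fv) u z := by intro z; simp [hAdef]
  refine ⟨A, (hmemA u).2 Relation.ReflTransGen.refl, fun h => hdis ((hmemA v).1 h), ?_⟩
  have hAFv : ∀ a ∈ A, a ∉ Fv := by
    intro a ha
    rcases ((hmemA a).1 ha).cases_tail with rfl | ⟨c, _, hadj⟩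
    · exact hu
    · intro hm
      exact hadj.2.2 (by exact_mod_cast hm)
  have hsat : ∀ a w, a ∈ A → w ∉ A → w ∉ Fv → s(a, w) ∈ E →
      Multiset.count s(a, w) E ≤ Multiset.count s(a, w) Fe := by
    intro a w ha hw hwf hE
    by_contra hlt
    push_neg at hlt
    have hmemsub : s(a, w) ∈ E - Fe := Multiset.mem_sub.2 hlt
    have hadj : Adj (E - Fe) (↑Fv) a w :=
      ⟨hmemsub, fun hm => hAFv a ha (by exact_mod_cast hm), fun hm => hwf (by exact_mod_cast hm)⟩
    exact hw ((hmemA w).2 (((hmemA a).1 ha).tail hadj))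
  set D : Finset V := bdry E T A with hDdef
  set D' : Finset V := D.filter (fun w => w ∉ Fv) with hD'def
  set Pd : Sym2 V → Prop := fun e => ∃ a ∈ A, ∃ w ∈ D', e = s(a, w) with hPd
  set Pc : Sym2 V → Prop := crossP T A with hPc
  have hD'p : ∀ w ∈ D', w ∉ A ∧ w ∉ T ∧ w ∉ Fv ∧ adjS E A w := by
    intro w hw
    rw [hD'def, Finset.mem_filter] at hw
    have h2 := mem_bdry.1 hw.1
    exact ⟨h2.1, h2.2.1, hw.2, h2.2.2⟩
  have hMor : cnt (fun e => Pc e ∨ Pd e) E ≤ Multiset.card Fe := by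
    refine cnt_le_card E Fe _ ?_
    intro e heE hcond
    rcases hcond with hc | hd
    · obtain ⟨a, b, rfl, ha, hb1, hb2⟩ := hc
      refine hsat a b ha hb2 (fun hm => hFv (by exact_mod_cast hm) hb1) heE
    · obtain ⟨a, ha, w, hw, rfl⟩ := hd
      obtain ⟨hw1, _, hw3, _⟩ := hD'p w hw
      exact hsat a w ha hw1 hw3 heE
  have hdisj : ∀ e ∈ E, ¬ (Pc e ∧ Pd e) := by
    rintro e heE ⟨hc, hd⟩
    obtain ⟨a, ha, w, hw, rfl⟩ := hd
    obtain ⟨hw1, hw2, _, _⟩ := hD'p w hw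
    obtain ⟨x, y, hxy, hx, hy1, hy2⟩ := hc
    rcases Sym2.eq_iff.1 hxy.symm with ⟨h1, h2⟩ | ⟨h1, h2⟩
    · exact hw2 (h2 ▸ hy1)
    · exact hw1 (h1 ▸ hx)
  have hcardM : cnt (fun e => Pc e ∨ Pd e) E = cnt Pc E + cnt Pd E :=
    cnt_or_eq E Pc Pd hdisj
  -- injection from D' into edges satisfying Pd
  have hD'card : D'.card ≤ cnt Pd E := by
    set g : V → Sym2 V := fun w =>
      if h : ∃ a, a ∈ A ∧ s(a, w) ∈ E then s(h.choose, w) else s(w, w) with hg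
    have hchoose : ∀ w, (h : ∃ a, a ∈ A ∧ s(a, w) ∈ E) →
        h.choose ∈ A ∧ s(h.choose, w) ∈ E := fun w h => h.choose_spec
    have hadj' : ∀ w ∈ D', ∃ a, a ∈ A ∧ s(a, w) ∈ E := by
      intro w hw
      exact (hD'p w hw).2.2.2
    have hgmem : ∀ w ∈ D', g w ∈ (flt Pd E).toFinset := by
      intro w hw
      have h4 := hadj' w hw
      rw [hg]
      simp only [dif_pos h4]
      rw [Multiset.mem_toFinset, mem_flt]
      exact ⟨(hchoose w h4).2, ⟨h4.choose, (hchoose w h4).1, w, hw, rfl⟩⟩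
    have hinj : Set.InjOn g ↑D' := by
      intro w1 hw1 w2 hw2 heq
      have h14 := hadj' w1 (by exact_mod_cast hw1)
      have h24 := hadj' w2 (by exact_mod_cast hw2)
      have h21 := (hD'p w2 (by exact_mod_cast hw2)).1
      rw [hg] at heq
      simp only [dif_pos h14, dif_pos h24] at heq
      rcases Sym2.eq_iff.1 heq with ⟨_, h⟩ | ⟨h1, h2⟩
      · exact h
      · exact absurd (h1 ▸ (hchoose w1 h14).1) h21
    calc D'.card ≤ (flt Pd E).toFinset.card :=
          Finset.card_le_card_of_injOn g hgmem hinj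
      _ ≤ Multiset.card (flt Pd E) := Multiset.toFinset_card_le _
      _ = cnt Pd E := (cnt_eq_card_flt _ _).symm
  have hsplit : (D.filter (fun w => w ∈ Fv)).card + D'.card = D.card := by
    rw [hD'def]
    exact Finset.card_filter_add_card_filter_not (fun w => w ∈ Fv)
  have hsub : (D.filter (fun w => w ∈ Fv)).card ≤ Fv.card :=
    Finset.card_le_card (fun w hw => (Finset.mem_filter.1 hw).2)
  have hfE : fE E T A = D.card + cnt Pc E := rfl
  omega

lemma exists_min_cut (E : Multiset (Sym2 V)) (T : Set V) {u v : V} (hu : u ∈ T) (hne : u ≠ v) :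
    ∃ A : Finset V, u ∈ A ∧ v ∉ A ∧ fE E T A ≤ elemConn E T u v := by
  obtain ⟨Fv, Fe, h1, h2, h3, h4⟩ := elemConn_spec E T u v hne
  obtain ⟨A, hA1, hA2, hA3⟩ :=
    exists_fE_le E T Fv Fe h1 h2 (fun hm => (h1 (by exact_mod_cast hm)) hu) h4
  exact ⟨A, hA1, hA2, h3 ▸ hA3⟩

lemma cnt_mono {α : Type*} (p : α → Prop) {s t : Multiset α} (h : s ≤ t) :
    cnt p s ≤ cnt p t := by
  rw [cnt_eq_card_flt, cnt_eq_card_flt]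
  exact Multiset.card_le_card (Multiset.filter_le_filter _ h)

lemma adjS_erase {E : Multiset (Sym2 V)} {e0 : Sym2 V} {A : Finset V} {w : V}
    (h : adjS (E.erase e0) A w) : adjS E A w := by
  obtain ⟨a, ha, hm⟩ := h
  exact ⟨a, ha, Multiset.mem_of_mem_erase hm⟩

lemma bdry_erase_subset (E : Multiset (Sym2 V)) (e0 : Sym2 V) (T : Set V) (A : Finset V) :
    bdry (E.erase e0) T A ⊆ bdry E T A := by
  intro w hw
  obtain ⟨h1, h2, h3⟩ := mem_bdry.1 hw
  exact mem_bdry.2 ⟨h1, h2, adjS_erase h3⟩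

lemma fE_erase_le (E : Multiset (Sym2 V)) (e0 : Sym2 V) (T : Set V) (A : Finset V) :
    fE (E.erase e0) T A ≤ fE E T A :=
  add_le_add (Finset.card_le_card (bdry_erase_subset E e0 T A))
    (cnt_mono _ (Multiset.erase_le _ _))

lemma not_crossP_pq {T : Set V} {A : Finset V} {p q : V} (hp : p ∉ T) (hq : q ∉ T) :
    ¬ crossP T A s(p, q) := by
  intro h
  rcases crossP_pair.1 h with ⟨_, h2, _⟩ | ⟨_, h2, _⟩
  · exact hq h2
  · exact hp h2

lemma cnt_cross_erase_pq {E : Multiset (Sym2 V)} {T : Set V} {A : Finset V} {p q : V}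
    (hp : p ∉ T) (hq : q ∉ T) :
    cnt (crossP T A) (E.erase s(p, q)) = cnt (crossP T A) E := by
  by_cases he : s(p, q) ∈ E
  · conv_rhs => rw [← Multiset.cons_erase he]
    rw [cnt_cons, if_neg (not_crossP_pq hp hq)]
    omega
  · rw [Multiset.erase_of_notMem he]

lemma bdry_erase_struct {E : Multiset (Sym2 V)} {T : Set V} {A : Finset V} {p q : V}
    (w : V) (hw : w ∈ bdry E T A) (hw' : w ∉ bdry (E.erase s(p, q)) T A) :
    (w = q ∧ p ∈ A ∧ ¬ adjS (E.erase s(p, q)) A q) ∨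
    (w = p ∧ q ∈ A ∧ ¬ adjS (E.erase s(p, q)) A p) := by
  obtain ⟨h1, h2, a, ha, haw⟩ := mem_bdry.1 hw
  have hnadj : ¬ adjS (E.erase s(p, q)) A w := by
    intro hadj
    exact hw' (mem_bdry.2 ⟨h1, h2, hadj⟩)
  have heq : s(a, w) = s(p, q) := by
    by_contra hne
    exact hnadj ⟨a, ha, (Multiset.mem_erase_of_ne hne).2 haw⟩
  rcases Sym2.eq_iff.1 heq with ⟨hap, hwq⟩ | ⟨haq, hwp⟩
  · subst hwq
    exact Or.inl ⟨rfl, hap ▸ ha, hnadj⟩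
  · subst hwp
    exact Or.inr ⟨rfl, haq ▸ ha, hnadj⟩

lemma card_bdry_le_erase_add_one {E : Multiset (Sym2 V)} {T : Set V} {A : Finset V} {p q : V} :
    (bdry E T A).card ≤ (bdry (E.erase s(p, q)) T A).card + 1 := by
  set DE := bdry E T A
  set Der := bdry (E.erase s(p, q)) T A
  have hsplit : DE ⊆ Der ∪ (DE \ Der) := by
    intro w hw
    rw [Finset.mem_union, Finset.mem_sdiff]
    by_cases h : w ∈ Der
    · exact Or.inl h
    · exact Or.inr ⟨hw, h⟩
  have hsd : (DE \ Der).card ≤ 1 := by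
    refine Finset.card_le_one.2 ?_
    intro w1 hw1 w2 hw2
    rw [Finset.mem_sdiff] at hw1 hw2
    rcases bdry_erase_struct w1 hw1.1 hw1.2 with ⟨e1, hpa1, _⟩ | ⟨e1, hqa1, _⟩ <;>
      rcases bdry_erase_struct w2 hw2.1 hw2.2 with ⟨e2, hpa2, _⟩ | ⟨e2, hqa2, _⟩
    · exact e1.trans e2.symm
    · exfalso
      have : q ∉ A := e1 ▸ (mem_bdry.1 hw1.1).1
      exact this hqa2
    · exfalso
      have : q ∉ A := e2 ▸ (mem_bdry.1 hw2.1).1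
      exact this hqa1
    · exact e1.trans e2.symm
  calc DE.card ≤ (Der ∪ (DE \ Der)).card := Finset.card_le_card hsplit
    _ ≤ Der.card + (DE \ Der).card := Finset.card_union_le _ _
    _ ≤ Der.card + 1 := by omega

lemma fE_le_erase_add_one {E : Multiset (Sym2 V)} {T : Set V} {A : Finset V} {p q : V}
    (hp : p ∉ T) (hq : q ∉ T) :
    fE E T A ≤ fE (E.erase s(p, q)) T A + 1 := by
  unfold fE
  rw [cnt_cross_erase_pq hp hq]
  have := card_bdry_le_erase_add_one (E := E) (T := T) (A := A) (p := p) (q := q)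
  omega

lemma erase_drop_struct {E : Multiset (Sym2 V)} {T : Set V} {A : Finset V} {p q : V}
    (hp : p ∉ T) (hq : q ∉ T)
    (hlt : fE (E.erase s(p, q)) T A < fE E T A) :
    (p ∈ A ∧ q ∉ A ∧ ¬ adjS (E.erase s(p, q)) A q) ∨
    (q ∈ A ∧ p ∉ A ∧ ¬ adjS (E.erase s(p, q)) A p) := by
  have hbeta := cnt_cross_erase_pq (E := E) (A := A) hp hq
  have hcard : (bdry (E.erase s(p, q)) T A).card < (bdry E T A).card := by
    unfold fE at hlt
    omega
  have hex : ∃ w, w ∈ bdry E T A ∧ w ∉ bdry (E.erase s(p, q)) T A := by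
    by_contra hno
    push_neg at hno
    exact absurd (Finset.card_le_card (fun w hw => hno w hw)) (by omega)
  obtain ⟨w, hw1, hw2⟩ := hex
  rcases bdry_erase_struct w hw1 hw2 with ⟨he, h1, h2⟩ | ⟨he, h1, h2⟩
  · exact Or.inl ⟨h1, he ▸ (mem_bdry.1 hw1).1, h2⟩
  · exact Or.inr ⟨h1, he ▸ (mem_bdry.1 hw1).1, h2⟩

lemma crossP_union_imp {T : Set V} {A B : Finset V} (e : Sym2 V)
    (h : crossP T (A ∪ B) e) : crossP T A e ∨ crossP T B e := by
  induction e using Sym2.ind with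
  | _ x y =>
    rw [crossP_pair] at h
    rw [crossP_pair, crossP_pair]
    simp only [Finset.mem_union] at h
    tauto

lemma crossP_inter_imp {T : Set V} {A B : Finset V} (e : Sym2 V)
    (h : crossP T (A ∩ B) e) : crossP T A e ∨ crossP T B e := by
  induction e using Sym2.ind with
  | _ x y =>
    rw [crossP_pair] at h
    rw [crossP_pair, crossP_pair]
    simp only [Finset.mem_inter] at h
    tauto

lemma crossP_union_inter_imp {T : Set V} {A B : Finset V} (e : Sym2 V)
    (hu : crossP T (A ∪ B) e) (hi : crossP T (A ∩ B) e) :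
    crossP T A e ∧ crossP T B e := by
  induction e using Sym2.ind with
  | _ x y =>
    rw [crossP_pair] at hu hi
    rw [crossP_pair, crossP_pair]
    simp only [Finset.mem_union] at hu
    simp only [Finset.mem_inter] at hi
    tauto

lemma fE_submod_strict (E : Multiset (Sym2 V)) (T : Set V) (A B : Finset V) (q : V)
    (hqA : q ∉ A) (hqB : q ∉ B) (hqT : q ∉ T)
    (h1 : adjS E A q) (h2 : adjS E B q) (h3 : ¬ adjS E (A ∩ B) q) :
    fE E T (A ∪ B) + fE E T (A ∩ B) + 1 ≤ fE E T A + fE E T B := by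
  have hbeta : cnt (crossP T (A ∪ B)) E + cnt (crossP T (A ∩ B)) E ≤
      cnt (crossP T A) E + cnt (crossP T B) E :=
    cnt_submod E _ _ _ _ (fun e _ => crossP_union_inter_imp e)
      (fun e _ => crossP_union_imp e) (fun e _ => crossP_inter_imp e)
  set DU := bdry E T (A ∪ B)
  set DI := bdry E T (A ∩ B)
  set DA := bdry E T A
  set DB := bdry E T B
  have hUsub : DU ⊆ DA ∪ DB := by
    intro w hw
    obtain ⟨hw1, hw2, a, ha, haw⟩ := mem_bdry.1 hw
    rw [Finset.mem_union] at ha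
    rw [Finset.mem_union]
    have hwA : w ∉ A := fun h => hw1 (Finset.mem_union.2 (Or.inl h))
    have hwB : w ∉ B := fun h => hw1 (Finset.mem_union.2 (Or.inr h))
    rcases ha with ha | ha
    · exact Or.inl (mem_bdry.2 ⟨hwA, hw2, a, ha, haw⟩)
    · exact Or.inr (mem_bdry.2 ⟨hwB, hw2, a, ha, haw⟩)
  have hIsub : DI ⊆ DA ∪ DB := by
    intro w hw
    obtain ⟨hw1, hw2, a, ha, haw⟩ := mem_bdry.1 hw
    rw [Finset.mem_inter] at ha
    rw [Finset.mem_union]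
    by_cases hwA : w ∈ A
    · have hwB : w ∉ B := fun h => hw1 (Finset.mem_inter.2 ⟨hwA, h⟩)
      exact Or.inr (mem_bdry.2 ⟨hwB, hw2, a, ha.2, haw⟩)
    · exact Or.inl (mem_bdry.2 ⟨hwA, hw2, a, ha.1, haw⟩)
  have hUIsub : DU ∩ DI ⊆ (DA ∩ DB).erase q := by
    intro w hw
    rw [Finset.mem_inter] at hw
    obtain ⟨hu1, hu2, a, ha, haw⟩ := mem_bdry.1 hw.1
    obtain ⟨hi1, hi2, b, hb, hbw⟩ := mem_bdry.1 hw.2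
    have hwA : w ∉ A := fun h => hu1 (Finset.mem_union.2 (Or.inl h))
    have hwB : w ∉ B := fun h => hu1 (Finset.mem_union.2 (Or.inr h))
    rw [Finset.mem_inter] at hb
    refine Finset.mem_erase.2 ⟨?_, Finset.mem_inter.2
      ⟨mem_bdry.2 ⟨hwA, hu2, b, hb.1, hbw⟩, mem_bdry.2 ⟨hwB, hu2, b, hb.2, hbw⟩⟩⟩
    intro hwq
    exact h3 ⟨b, Finset.mem_inter.2 hb, hwq ▸ hbw⟩
  have hqin : q ∈ DA ∩ DB :=
    Finset.mem_inter.2 ⟨mem_bdry.2 ⟨hqA, hqT, h1⟩, mem_bdry.2 ⟨hqB, hqT, h2⟩⟩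
  have e1 : DU.card + DI.card = (DU ∪ DI).card + (DU ∩ DI).card :=
    (Finset.card_union_add_card_inter _ _).symm
  have e2 : (DU ∪ DI).card ≤ (DA ∪ DB).card :=
    Finset.card_le_card (Finset.union_subset hUsub hIsub)
  have e3 : (DU ∩ DI).card ≤ ((DA ∩ DB).erase q).card := Finset.card_le_card hUIsub
  have e4 : ((DA ∩ DB).erase q).card = (DA ∩ DB).card - 1 := Finset.card_erase_of_mem hqin
  have e5 : (DA ∪ DB).card + (DA ∩ DB).card = DA.card + DB.card :=
    Finset.card_union_add_card_inter _ _
  have e6 : 1 ≤ (DA ∩ DB).card := Finset.card_pos.2 ⟨q, hqin⟩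
  have hfU : fE E T (A ∪ B) = DU.card + cnt (crossP T (A ∪ B)) E := rfl
  have hfI : fE E T (A ∩ B) = DI.card + cnt (crossP T (A ∩ B)) E := rfl
  have hfA : fE E T A = DA.card + cnt (crossP T A) E := rfl
  have hfB : fE E T B = DB.card + cnt (crossP T B) E := rfl
  omega

lemma crossP_compl_imp {E : Multiset (Sym2 V)} {T : Set V} {A : Finset V}
    (e : Sym2 V) (he : e ∈ E)
    (h : crossP T (Finset.univ \ (A ∪ bdry E T A)) e) : crossP T A e := by
  set D := bdry E T A with hD
  set Ah := Finset.univ \ (A ∪ D) with hAh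
  have memAh : ∀ z, z ∈ Ah ↔ z ∉ A ∧ z ∉ D := by
    intro z
    rw [hAh, Finset.mem_sdiff, Finset.mem_union]
    constructor
    · rintro ⟨_, h⟩
      exact ⟨fun hz => h (Or.inl hz), fun hz => h (Or.inr hz)⟩
    · rintro ⟨h1, h2⟩
      exact ⟨Finset.mem_univ _, fun hc => hc.elim h1 h2⟩
  obtain ⟨a, b, rfl, ha, hb1, hb2⟩ := h
  -- a ∈ Ah, b ∈ T, b ∉ Ah
  have haA : a ∉ A := ((memAh a).1 ha).1
  have haD : a ∉ D := ((memAh a).1 ha).2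
  -- b ∈ A ∪ D, b ∈ T so b ∉ D, hence b ∈ A
  have hbA : b ∈ A := by
    by_contra hbA
    have hbD : b ∉ D := by
      intro hbD
      exact (mem_bdry.1 hbD).2.1 hb1
    exact hb2 ((memAh b).2 ⟨hbA, hbD⟩)
  -- a is a terminal, else a would be in D
  have haT : a ∈ T := by
    by_contra haT
    refine haD (mem_bdry.2 ⟨haA, haT, b, hbA, ?_⟩)
    rw [Sym2.eq_swap]
    exact he
  exact ⟨b, a, Sym2.eq_swap, hbA, haT, haA⟩

lemma fE_compl (E : Multiset (Sym2 V)) (T : Set V) (A : Finset V) :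
    fE E T (Finset.univ \ (A ∪ bdry E T A)) ≤ fE E T A := by
  set D := bdry E T A with hD
  set Ah := Finset.univ \ (A ∪ D) with hAh
  have memAh : ∀ z, z ∈ Ah ↔ z ∉ A ∧ z ∉ D := by
    intro z
    rw [hAh, Finset.mem_sdiff, Finset.mem_union]
    constructor
    · rintro ⟨_, h⟩
      exact ⟨fun hz => h (Or.inl hz), fun hz => h (Or.inr hz)⟩
    · rintro ⟨h1, h2⟩
      exact ⟨Finset.mem_univ _, fun hc => hc.elim h1 h2⟩
  set W : Finset V := (bdry E T Ah).filter (fun w => w ∈ A) with hW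
  have hWspec : ∀ w ∈ W, w ∈ A ∧ w ∉ T ∧ ∃ z, z ∈ T ∧ z ∉ A ∧ z ∈ Ah ∧ s(z, w) ∈ E := by
    intro w hw
    rw [hW, Finset.mem_filter] at hw
    obtain ⟨hb, hwA⟩ := hw
    obtain ⟨h1, h2, z, hz, hzw⟩ := mem_bdry.1 hb
    have hzA : z ∉ A := ((memAh z).1 hz).1
    have hzD : z ∉ D := ((memAh z).1 hz).2
    have hzT : z ∈ T := by
      by_contra hzT
      refine hzD (mem_bdry.2 ⟨hzA, hzT, w, hwA, ?_⟩)
      rw [Sym2.eq_swap]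
      exact Multiset.mem_of_le le_rfl hzw
    exact ⟨hwA, h2, z, hzT, hzA, hz, hzw⟩
  have hbsub : bdry E T Ah ⊆ D ∪ W := by
    intro w hw
    obtain ⟨h1, h2, h3⟩ := mem_bdry.1 hw
    rw [Finset.mem_union]
    by_cases hwA : w ∈ A
    · exact Or.inr (by rw [hW, Finset.mem_filter]; exact ⟨hw, hwA⟩)
    · have hwD : w ∈ D ∨ w ∈ Ah := by
        by_cases hD' : w ∈ D
        · exact Or.inl hD'
        · exact Or.inr ((memAh w).2 ⟨hwA, hD'⟩)
      rcases hwD with h | h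
      · exact Or.inl h
      · exact absurd h h1
  -- injection from W into crossing edges of A that do not cross Ah
  set P : Sym2 V → Prop := fun e => crossP T A e ∧ ¬ crossP T Ah e with hP
  have hWcard : W.card ≤ cnt P E := by
    set g : V → Sym2 V := fun w =>
      if h : ∃ z, z ∈ T ∧ z ∉ A ∧ z ∈ Ah ∧ s(z, w) ∈ E then s(h.choose, w) else s(w, w) with hg
    have hgmem : ∀ w ∈ W, g w ∈ (flt P E).toFinset := by
      intro w hw
      obtain ⟨hwA, hwT, hex⟩ := hWspec w hw
      rw [hg]
      simp only [dif_pos hex]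
      obtain ⟨hzT, hzA, hzAh, hzE⟩ := hex.choose_spec
      rw [Multiset.mem_toFinset, mem_flt]
      refine ⟨hzE, ⟨w, hex.choose, Sym2.eq_swap, hwA, hzT, hzA⟩, ?_⟩
      rintro ⟨x, y, hxy, hx, hy1, hy2⟩
      rcases Sym2.eq_iff.1 hxy.symm with ⟨hx1, hy1'⟩ | ⟨hx1, hy1'⟩
      · -- x = z, y = w : w ∈ T contradiction
        exact hwT (hy1' ▸ hy1)
      · -- x = w, y = z : w ∈ Ah but w ∈ A
        have : w ∈ Ah := hx1 ▸ hx
        exact ((memAh w).1 this).1 hwA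
    have hinj : Set.InjOn g ↑W := by
      intro w1 hw1 w2 hw2 heq
      obtain ⟨h1A, h1T, hex1⟩ := hWspec w1 (by exact_mod_cast hw1)
      obtain ⟨h2A, h2T, hex2⟩ := hWspec w2 (by exact_mod_cast hw2)
      rw [hg] at heq
      simp only [dif_pos hex1, dif_pos hex2] at heq
      rcases Sym2.eq_iff.1 heq with ⟨_, h⟩ | ⟨h1, h2⟩
      · exact h
      · -- hex1.choose = w2 : but choose ∈ T and w2 ∉ T
        exact absurd (h1 ▸ hex1.choose_spec.1) h2T
    calc W.card ≤ (flt P E).toFinset.card := Finset.card_le_card_of_injOn g hgmem hinj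
      _ ≤ Multiset.card (flt P E) := Multiset.toFinset_card_le _
      _ = cnt P E := (cnt_eq_card_flt _ _).symm
  have hsplitc : cnt (crossP T A) E =
      cnt (fun e => crossP T A e ∧ crossP T Ah e) E + cnt P E := by
    rw [hP]
    rw [← cnt_or_eq E _ _ (by
      rintro e he ⟨⟨_, h1⟩, _, h2⟩
      exact h2 h1)]
    refine cnt_eq_of_iff E _ _ ?_
    intro e he
    constructor
    · intro h
      by_cases hc : crossP T Ah e
      · exact Or.inl ⟨h, hc⟩
      · exact Or.inr ⟨h, hc⟩
    · rintro (⟨h, _⟩ | ⟨h, _⟩) <;> exact h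
  have hAhle : cnt (crossP T Ah) E ≤ cnt (fun e => crossP T A e ∧ crossP T Ah e) E := by
    refine cnt_le_of_imp E _ _ ?_
    intro e he h
    exact ⟨crossP_compl_imp e he h, h⟩
  have hbcard : (bdry E T Ah).card ≤ D.card + W.card := by
    calc (bdry E T Ah).card ≤ (D ∪ W).card := Finset.card_le_card hbsub
      _ ≤ D.card + W.card := Finset.card_union_le _ _
  have hfAh : fE E T Ah = (bdry E T Ah).card + cnt (crossP T Ah) E := rfl
  have hfA : fE E T A = D.card + cnt (crossP T A) E := rfl
  omega

section Contract

variable {E : Multiset (Sym2 V)} {T : Set V} {p q : V}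

lemma collapse_q : collapse p q q = p := by simp [collapse]

lemma collapse_ne {x : V} (h : x ≠ q) : collapse p q x = x := by simp [collapse, h]

lemma collapse_ne_q (hpq : p ≠ q) (x : V) : collapse p q x ≠ q := by
  unfold collapse
  split
  · exact hpq
  · assumption

lemma collapse_cases (hpq : p ≠ q) {x a : V} (h : collapse p q x = a) :
    (x = a ∧ a ≠ q) ∨ (x = q ∧ a = p) := by
  unfold collapse at h
  by_cases hx : x = q
  · rw [if_pos hx] at h
    exact Or.inr ⟨hx, h.symm⟩
  · rw [if_neg hx] at h
    exact Or.inl ⟨h, h ▸ hx⟩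

lemma mem_contractE {e : Sym2 V} :
    e ∈ contractE E p q ↔ (∃ e' ∈ E, Sym2.map (collapse p q) e' = e) ∧ ¬ e.IsDiag := by
  unfold contractE
  rw [Multiset.mem_filter, Multiset.mem_map]

lemma adjS_contract_destruct {A : Finset V} {w : V}
    (h : adjS (contractE E p q) A w) :
    ∃ x y, s(x, y) ∈ E ∧ collapse p q x ∈ A ∧ collapse p q y = w := by
  obtain ⟨a, ha, hm⟩ := h
  obtain ⟨⟨e', he', hmap⟩, hdiag⟩ := mem_contractE.1 hm
  induction e' using Sym2.ind with
  | _ x y =>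
    rw [Sym2.map_pair_eq] at hmap
    rcases Sym2.eq_iff.1 hmap with ⟨h1, h2⟩ | ⟨h1, h2⟩
    · exact ⟨x, y, he', h1 ▸ ha, h2⟩
    · exact ⟨y, x, Sym2.eq_swap ▸ he', h2 ▸ ha, h1⟩

lemma adjS_contract_intro {A : Finset V} {x y : V}
    (hxy : s(x, y) ∈ E) (hx : collapse p q x ∈ A)
    (hne : collapse p q x ≠ collapse p q y) :
    adjS (contractE E p q) A (collapse p q y) := by
  refine ⟨collapse p q x, hx, ?_⟩
  rw [mem_contractE]
  refine ⟨⟨s(x, y), hxy, Sym2.map_pair_eq _ _ _⟩, ?_⟩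
  rw [Sym2.mk_isDiag_iff]
  exact hne

lemma not_adjS_contract_q (hpq : p ≠ q) (A : Finset V) :
    ¬ adjS (contractE E p q) A q := by
  intro h
  obtain ⟨x, y, _, _, hy⟩ := adjS_contract_destruct h
  exact collapse_ne_q hpq y hy

lemma adjS_contract_iff (hpq : p ≠ q) {A : Finset V} {w : V}
    (hpA : p ∉ A) (hqA : q ∉ A) (hwA : w ∉ A) (hwp : w ≠ p) (hwq : w ≠ q) :
    adjS (contractE E p q) A w ↔ adjS E A w := by
  constructor
  · intro h
    obtain ⟨x, y, hxy, hx, hy⟩ := adjS_contract_destruct h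
    have hxq : x ≠ q := fun hh => hpA (by rw [hh, collapse_q] at hx; exact hx)
    rw [collapse_ne hxq] at hx
    have hyq : y ≠ q := fun hh => hwp (by rw [hh, collapse_q] at hy; exact hy.symm)
    rw [collapse_ne hyq] at hy
    exact ⟨x, hx, hy ▸ hxy⟩
  · rintro ⟨a, ha, haw⟩
    have haq : a ≠ q := fun hh => hqA (hh ▸ ha)
    have h2 := adjS_contract_intro (p := p) (q := q) (A := A) haw (by rwa [collapse_ne haq])
      (by rw [collapse_ne haq, collapse_ne hwq]; exact fun hc => hwA (hc ▸ ha))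
    rwa [collapse_ne hwq] at h2

lemma adjS_contract_p_iff (hpq : p ≠ q) {A : Finset V}
    (hpA : p ∉ A) (hqA : q ∉ A) :
    adjS (contractE E p q) A p ↔ (adjS E A p ∨ adjS E A q) := by
  constructor
  · intro h
    obtain ⟨x, y, hxy, hx, hy⟩ := adjS_contract_destruct h
    have hxq : x ≠ q := by
      intro hc
      rw [hc, collapse_q] at hx
      exact hpA hx
    rw [collapse_ne hxq] at hx
    rcases collapse_cases hpq hy with ⟨rfl, _⟩ | ⟨rfl, _⟩
    · exact Or.inl ⟨x, hx, hxy⟩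
    · exact Or.inr ⟨x, hx, hxy⟩
  · intro h
    rcases h with ⟨a, ha, haw⟩ | ⟨a, ha, haw⟩
    · have haq : a ≠ q := fun h => hqA (h ▸ ha)
      have hppq : p ≠ q := hpq
      have := adjS_contract_intro (p := p) (q := q) (A := A) haw (by rwa [collapse_ne haq])
        (by rw [collapse_ne haq, collapse_ne hppq]; intro hc; exact hpA (hc ▸ ha))
      rwa [collapse_ne hppq] at this
    · have haq : a ≠ q := fun h => hqA (h ▸ ha)
      have := adjS_contract_intro (p := p) (q := q) (A := A) haw (by rwa [collapse_ne haq])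
        (by rw [collapse_ne haq, collapse_q]; intro hc; exact hpA (hc ▸ ha))
      rwa [collapse_q] at this

lemma countP_inst_congr {α : Type*} {P : α → Prop} (i1 i2 : DecidablePred P) (s : Multiset α) :
    @Multiset.countP α P i1 s = @Multiset.countP α P i2 s := by
  have h : i1 = i2 := funext fun a => Subsingleton.elim _ _
  subst h
  rfl

lemma cnt_contract (P : Sym2 V → Prop) :
    cnt P (contractE E p q) =
      cnt (fun e => P (Sym2.map (collapse p q) e) ∧ ¬ (Sym2.map (collapse p q) e).IsDiag) E := by
  unfold cnt contractE
  rw [Multiset.countP_filter, Multiset.countP_map, ← Multiset.countP_eq_card_filter]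
  exact countP_inst_congr _ _ _

lemma crossP_contract_pointwise (hpq : p ≠ q) (hp : p ∉ T) (hq : q ∉ T) {A : Finset V}
    (hpA : p ∉ A) (hqA : q ∉ A) (e : Sym2 V) :
    (crossP T A (Sym2.map (collapse p q) e) ∧ ¬ (Sym2.map (collapse p q) e).IsDiag)
      ↔ crossP T A e := by
  induction e using Sym2.ind with
  | _ x y =>
    rw [Sym2.map_pair_eq, Sym2.mk_isDiag_iff]
    constructor
    · rintro ⟨hc, hd⟩
      rcases crossP_pair.1 hc with ⟨h1, h2, h3⟩ | ⟨h1, h2, h3⟩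
      · -- collapse x ∈ A, collapse y ∈ T \ A
        have hxq : x ≠ q := fun hh => hpA (by rw [hh, collapse_q] at h1; exact h1)
        have hyq : y ≠ q := fun hh => hp (by rw [hh, collapse_q] at h2; exact h2)
        rw [collapse_ne hxq] at h1
        rw [collapse_ne hyq] at h2 h3
        exact crossP_pair.2 (Or.inl ⟨h1, h2, h3⟩)
      · have hyq : y ≠ q := fun hh => hpA (by rw [hh, collapse_q] at h1; exact h1)
        have hxq : x ≠ q := fun hh => hp (by rw [hh, collapse_q] at h2; exact h2)
        rw [collapse_ne hyq] at h1
        rw [collapse_ne hxq] at h2 h3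
        exact crossP_pair.2 (Or.inr ⟨h1, h2, h3⟩)
    · intro hc
      rcases crossP_pair.1 hc with ⟨h1, h2, h3⟩ | ⟨h1, h2, h3⟩
      · have hxq : x ≠ q := fun hh => hqA (hh ▸ h1)
        have hyq : y ≠ q := fun hh => hq (hh ▸ h2)
        rw [collapse_ne hxq, collapse_ne hyq]
        exact ⟨crossP_pair.2 (Or.inl ⟨h1, h2, h3⟩), fun hh => h3 (hh ▸ h1)⟩
      · have hyq : y ≠ q := fun hh => hqA (hh ▸ h1)
        have hxq : x ≠ q := fun hh => hq (hh ▸ h2)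
        rw [collapse_ne hxq, collapse_ne hyq]
        exact ⟨crossP_pair.2 (Or.inr ⟨h1, h2, h3⟩), fun hh => h3 (hh.symm ▸ h1)⟩

lemma cnt_cross_contract_eq (hpq : p ≠ q) (hp : p ∉ T) (hq : q ∉ T) {A : Finset V}
    (hpA : p ∉ A) (hqA : q ∉ A) :
    cnt (crossP T A) (contractE E p q) = cnt (crossP T A) E := by
  rw [cnt_contract]
  exact cnt_eq_of_iff E _ _ (fun e _ => crossP_contract_pointwise hpq hp hq hpA hqA e)

lemma collapse_mem_A {A : Finset V} (hpA : p ∈ A) (hqA : q ∈ A) {z : V}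
    (h : collapse p q z ∈ A) : z ∈ A := by
  by_cases hz : z = q
  · exact hz ▸ hqA
  · rwa [collapse_ne hz] at h

lemma fE_contract_le_both (hpq : p ≠ q) (hp : p ∉ T) (hq : q ∉ T)
    {A : Finset V} (hpA : p ∈ A) (hqA : q ∈ A) :
    fE (contractE E p q) T A ≤ fE E T A := by
  have hbd : bdry (contractE E p q) T A ⊆ bdry E T A := by
    intro w hw
    obtain ⟨h1, h2, h3⟩ := mem_bdry.1 hw
    obtain ⟨x, y, hxy, hx, hy⟩ := adjS_contract_destruct h3
    have hxA : x ∈ A := collapse_mem_A hpA hqA hx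
    have hyw : y = w := by
      rcases collapse_cases hpq hy with ⟨h4, _⟩ | ⟨rfl, rfl⟩
      · exact h4
      · exact absurd hpA h1
    exact mem_bdry.2 ⟨h1, h2, x, hxA, hyw ▸ hxy⟩
  have hcnt : cnt (crossP T A) (contractE E p q) ≤ cnt (crossP T A) E := by
    rw [cnt_contract]
    refine cnt_le_of_imp _ _ _ ?_
    intro e _ hcr
    obtain ⟨hcross, _⟩ := hcr
    induction e using Sym2.ind with
    | _ x y =>
      rw [Sym2.map_pair_eq] at hcross
      rcases crossP_pair.1 hcross with ⟨h1, h2, h3⟩ | ⟨h1, h2, h3⟩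
      · have hyq : y ≠ q := fun hc => hp (by rw [hc, collapse_q] at h2; exact h2)
        rw [collapse_ne hyq] at h2 h3
        exact crossP_pair.2 (Or.inl ⟨collapse_mem_A hpA hqA h1, h2, h3⟩)
      · have hxq : x ≠ q := fun hc => hp (by rw [hc, collapse_q] at h2; exact h2)
        rw [collapse_ne hxq] at h2 h3
        exact crossP_pair.2 (Or.inr ⟨collapse_mem_A hpA hqA h1, h2, h3⟩)
  exact add_le_add (Finset.card_le_card hbd) hcnt

lemma fE_contract_le_erase_p (hpq : p ≠ q) (hp : p ∉ T) (hq : q ∉ T) (he : s(p, q) ∈ E)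
    {A : Finset V} (hpA : p ∈ A) (hqA : q ∉ A) :
    fE (contractE E p q) T (A.erase p) ≤ fE E T A := by
  have hqD : q ∈ bdry E T A := mem_bdry.2 ⟨hqA, hq, p, hpA, he⟩
  have hbd : bdry (contractE E p q) T (A.erase p) ⊆ insert p ((bdry E T A).erase q) := by
    intro w hw
    obtain ⟨h1, h2, h3⟩ := mem_bdry.1 hw
    by_cases hwp : w = p
    · exact Finset.mem_insert.2 (Or.inl hwp)
    · have hwq : w ≠ q := fun hwq => not_adjS_contract_q hpq _ (hwq ▸ h3)
      refine Finset.mem_insert.2 (Or.inr (Finset.mem_erase.2 ⟨hwq, ?_⟩))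
      obtain ⟨x, y, hxy, hx, hy⟩ := adjS_contract_destruct h3
      have hxp : collapse p q x ≠ p := fun hc => (Finset.mem_erase.1 (hc ▸ hx)).1 rfl
      have hxq : x ≠ q := fun hc => hxp (by rw [hc, collapse_q])
      rw [collapse_ne hxq] at hx
      have hyq : y ≠ q := fun hc => hwp (by rw [hc, collapse_q] at hy; exact hy.symm)
      rw [collapse_ne hyq] at hy
      have hwA : w ∉ A := fun hc => h1 (Finset.mem_erase.2 ⟨hwp, hc⟩)
      exact mem_bdry.2 ⟨hwA, h2, x, (Finset.mem_erase.1 hx).2, hy ▸ hxy⟩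
  have hcard : (bdry (contractE E p q) T (A.erase p)).card ≤ (bdry E T A).card := by
    have h1 : 1 ≤ (bdry E T A).card := Finset.card_pos.2 ⟨q, hqD⟩
    calc (bdry (contractE E p q) T (A.erase p)).card
        ≤ (insert p ((bdry E T A).erase q)).card := Finset.card_le_card hbd
      _ ≤ ((bdry E T A).erase q).card + 1 := Finset.card_insert_le _ _
      _ = (bdry E T A).card - 1 + 1 := by rw [Finset.card_erase_of_mem hqD]
      _ ≤ (bdry E T A).card := by omega
  have hcnt : cnt (crossP T (A.erase p)) (contractE E p q) ≤ cnt (crossP T A) E := by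
    rw [cnt_contract]
    refine cnt_le_of_imp _ _ _ ?_
    intro e _ hcr
    obtain ⟨hcross, _⟩ := hcr
    induction e using Sym2.ind with
    | _ x y =>
      rw [Sym2.map_pair_eq] at hcross
      have main : ∀ a b : V, collapse p q a ∈ A.erase p → collapse p q b ∈ T →
          collapse p q b ∉ A.erase p → (a ∈ A ∧ b ∈ T ∧ b ∉ A) := by
        intro a b ha hb1 hb2
        have hap : collapse p q a ≠ p := fun hc => (Finset.mem_erase.1 (hc ▸ ha)).1 rfl
        have haq : a ≠ q := fun hc => hap (by rw [hc, collapse_q])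
        rw [collapse_ne haq] at ha
        have hbq : b ≠ q := fun hc => hp (by rw [hc, collapse_q] at hb1; exact hb1)
        rw [collapse_ne hbq] at hb1 hb2
        have hbp : b ≠ p := fun hc => hp (hc ▸ hb1)
        exact ⟨(Finset.mem_erase.1 ha).2, hb1, fun hc => hb2 (Finset.mem_erase.2 ⟨hbp, hc⟩)⟩
      rcases crossP_pair.1 hcross with ⟨h1, h2, h3⟩ | ⟨h1, h2, h3⟩
      · exact crossP_pair.2 (Or.inl (main x y h1 h2 h3))
      · exact crossP_pair.2 (Or.inr (main y x h1 h2 h3))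
  exact add_le_add hcard hcnt

lemma fE_contract_le_erase_q (hpq : p ≠ q) (hp : p ∉ T) (hq : q ∉ T) (he : s(p, q) ∈ E)
    {A : Finset V} (hqA : q ∈ A) (hpA : p ∉ A) :
    fE (contractE E p q) T (A.erase q) ≤ fE E T A := by
  have hpD : p ∈ bdry E T A := mem_bdry.2 ⟨hpA, hp, q, hqA, Sym2.eq_swap ▸ he⟩
  have hbd : bdry (contractE E p q) T (A.erase q) ⊆ bdry E T A := by
    intro w hw
    obtain ⟨h1, h2, h3⟩ := mem_bdry.1 hw
    by_cases hwp : w = p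
    · exact hwp ▸ hpD
    · have hwq : w ≠ q := fun hwq => not_adjS_contract_q hpq _ (hwq ▸ h3)
      obtain ⟨x, y, hxy, hx, hy⟩ := adjS_contract_destruct h3
      have hxq : x ≠ q := by
        intro hc
        rw [hc, collapse_q] at hx
        exact hpA ((Finset.mem_erase.1 hx).2)
      rw [collapse_ne hxq] at hx
      have hyq : y ≠ q := fun hc => hwp (by rw [hc, collapse_q] at hy; exact hy.symm)
      rw [collapse_ne hyq] at hy
      have hwA : w ∉ A := fun hc => h1 (Finset.mem_erase.2 ⟨hwq, hc⟩)
      exact mem_bdry.2 ⟨hwA, h2, x, (Finset.mem_erase.1 hx).2, hy ▸ hxy⟩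
  have hcnt : cnt (crossP T (A.erase q)) (contractE E p q) ≤ cnt (crossP T A) E := by
    rw [cnt_contract]
    refine cnt_le_of_imp _ _ _ ?_
    intro e _ hcr
    obtain ⟨hcross, _⟩ := hcr
    induction e using Sym2.ind with
    | _ x y =>
      rw [Sym2.map_pair_eq] at hcross
      have main : ∀ a b : V, collapse p q a ∈ A.erase q → collapse p q b ∈ T →
          collapse p q b ∉ A.erase q → (a ∈ A ∧ b ∈ T ∧ b ∉ A) := by
        intro a b ha hb1 hb2
        have haq : a ≠ q := by
          intro hc
          rw [hc, collapse_q] at ha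
          exact hpA ((Finset.mem_erase.1 ha).2)
        rw [collapse_ne haq] at ha
        have hbq : b ≠ q := fun hc => hp (by rw [hc, collapse_q] at hb1; exact hb1)
        rw [collapse_ne hbq] at hb1 hb2
        exact ⟨(Finset.mem_erase.1 ha).2, hb1, fun hc => hb2 (Finset.mem_erase.2 ⟨hbq, hc⟩)⟩
      rcases crossP_pair.1 hcross with ⟨h1, h2, h3⟩ | ⟨h1, h2, h3⟩
      · exact crossP_pair.2 (Or.inl (main x y h1 h2 h3))
      · exact crossP_pair.2 (Or.inr (main y x h1 h2 h3))
  exact add_le_add (Finset.card_le_card hbd) hcnt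

lemma fE_expand (hpq : p ≠ q) (hp : p ∉ T) (hq : q ∉ T)
    {B : Finset V} (hpB : p ∈ B) (hqB : q ∉ B) :
    fE E T (insert q B) ≤ fE (contractE E p q) T B := by
  have hbd : bdry E T (insert q B) ⊆ bdry (contractE E p q) T B := by
    intro w hw
    obtain ⟨h1, h2, a, ha, haw⟩ := mem_bdry.1 hw
    have hwq : w ≠ q := fun hc => h1 (hc ▸ Finset.mem_insert_self q B)
    have hwB : w ∉ B := fun hc => h1 (Finset.mem_insert_of_mem hc)
    have hcB : collapse p q a ∈ B := by
      by_cases haq : a = q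
      · rw [haq, collapse_q]; exact hpB
      · rw [collapse_ne haq]
        rcases Finset.mem_insert.1 ha with hc | hc
        · exact absurd hc haq
        · exact hc
    have hadj := adjS_contract_intro (p := p) (q := q) (A := B) haw hcB (by
      rw [collapse_ne hwq]
      intro hc
      exact hwB (hc ▸ hcB))
    rw [collapse_ne hwq] at hadj
    exact mem_bdry.2 ⟨hwB, h2, hadj⟩
  have hcnt : cnt (crossP T (insert q B)) E ≤ cnt (crossP T B) (contractE E p q) := by
    rw [cnt_contract]
    refine cnt_le_of_imp _ _ _ ?_
    intro e _ hcross
    induction e using Sym2.ind with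
    | _ x y =>
      rw [Sym2.map_pair_eq, Sym2.mk_isDiag_iff]
      have main : ∀ a b : V, a ∈ insert q B → b ∈ T → b ∉ insert q B →
          (collapse p q a ∈ B ∧ collapse p q b ∈ T ∧ collapse p q b ∉ B) ∧
            collapse p q a ≠ collapse p q b := by
        intro a b ha hb1 hb2
        have hbq : b ≠ q := fun hc => hb2 (hc ▸ Finset.mem_insert_self q B)
        have hbB : b ∉ B := fun hc => hb2 (Finset.mem_insert_of_mem hc)
        have hcB : collapse p q a ∈ B := by
          by_cases haq : a = q
          · rw [haq, collapse_q]; exact hpB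
          · rw [collapse_ne haq]
            rcases Finset.mem_insert.1 ha with hc | hc
            · exact absurd hc haq
            · exact hc
        rw [collapse_ne hbq]
        exact ⟨⟨hcB, hb1, hbB⟩, fun hc => hbB (hc ▸ hcB)⟩
      rcases crossP_pair.1 hcross with ⟨h1, h2, h3⟩ | ⟨h1, h2, h3⟩
      · obtain ⟨⟨g1, g2, g3⟩, g4⟩ := main x y h1 h2 h3
        exact ⟨crossP_pair.2 (Or.inl ⟨g1, g2, g3⟩), g4⟩
      · obtain ⟨⟨g1, g2, g3⟩, g4⟩ := main y x h1 h2 h3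
        exact ⟨crossP_pair.2 (Or.inr ⟨g1, g2, g3⟩), fun hc => g4 hc.symm⟩
  exact add_le_add (Finset.card_le_card hbd) hcnt

lemma card_inter_pair (X : Finset V) (hpq : p ≠ q) :
    X.card = (X \ {p, q}).card + (if p ∈ X then 1 else 0) + (if q ∈ X then 1 else 0) := by
  have hbase := Finset.card_sdiff_add_card_inter X ({p, q} : Finset V)
  have hint : (X ∩ {p, q}).card = (if p ∈ X then 1 else 0) + (if q ∈ X then 1 else 0) := by
    by_cases hp1 : p ∈ X <;> by_cases hq1 : q ∈ X
    · have : X ∩ {p, q} = {p, q} := by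
        ext z
        simp only [Finset.mem_inter, Finset.mem_insert, Finset.mem_singleton]
        constructor
        · exact fun h => h.2
        · rintro (rfl | rfl)
          · exact ⟨hp1, Or.inl rfl⟩
          · exact ⟨hq1, Or.inr rfl⟩
      rw [this, Finset.card_pair hpq, if_pos hp1, if_pos hq1]
    · have : X ∩ {p, q} = {p} := by
        ext z
        simp only [Finset.mem_inter, Finset.mem_insert, Finset.mem_singleton]
        constructor
        · rintro ⟨hz, rfl | rfl⟩
          · rfl
          · exact absurd hz hq1
        · rintro rfl
          exact ⟨hp1, Or.inl rfl⟩
      rw [this, Finset.card_singleton, if_pos hp1, if_neg hq1]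
    · have : X ∩ {p, q} = {q} := by
        ext z
        simp only [Finset.mem_inter, Finset.mem_insert, Finset.mem_singleton]
        constructor
        · rintro ⟨hz, rfl | rfl⟩
          · exact absurd hz hp1
          · rfl
        · rintro rfl
          exact ⟨hq1, Or.inr rfl⟩
      rw [this, Finset.card_singleton, if_neg hp1, if_pos hq1]
    · have : X ∩ {p, q} = ∅ := by
        ext z
        simp only [Finset.mem_inter, Finset.mem_insert, Finset.mem_singleton,
          Finset.notMem_empty, iff_false]
        rintro ⟨hz, rfl | rfl⟩
        · exact hp1 hz
        · exact hq1 hz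
      rw [this, Finset.card_empty, if_neg hp1, if_neg hq1]
  omega

lemma fE_contract_none_eq (hpq : p ≠ q) (hp : p ∉ T) (hq : q ∉ T)
    {A : Finset V} (hpA : p ∉ A) (hqA : q ∉ A) :
    fE E T A + (if adjS (contractE E p q) A p then 1 else 0)
      = fE (contractE E p q) T A
        + (if adjS E A p then 1 else 0) + (if adjS E A q then 1 else 0) := by
  have hbeta := cnt_cross_contract_eq (E := E) hpq hp hq hpA hqA
  have hsd : (bdry E T A) \ {p, q} = (bdry (contractE E p q) T A) \ {p, q} := by
    ext w
    simp only [Finset.mem_sdiff, Finset.mem_insert, Finset.mem_singleton]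
    constructor
    · rintro ⟨hb, hne⟩
      push_neg at hne
      obtain ⟨h1, h2, h3⟩ := mem_bdry.1 hb
      refine ⟨mem_bdry.2 ⟨h1, h2, (adjS_contract_iff hpq hpA hqA h1 hne.1 hne.2).2 h3⟩, ?_⟩
      push_neg
      exact hne
    · rintro ⟨hb, hne⟩
      push_neg at hne
      obtain ⟨h1, h2, h3⟩ := mem_bdry.1 hb
      refine ⟨mem_bdry.2 ⟨h1, h2, (adjS_contract_iff hpq hpA hqA h1 hne.1 hne.2).1 h3⟩, ?_⟩
      push_neg
      exact hne
  have m1 := card_inter_pair (bdry E T A) hpq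
  have m2 := card_inter_pair (bdry (contractE E p q) T A) hpq
  have hqG : q ∉ bdry (contractE E p q) T A :=
    fun h => not_adjS_contract_q hpq _ (mem_bdry.1 h).2.2
  have i1 : (if p ∈ bdry E T A then 1 else 0) = (if adjS E A p then 1 else 0) := by
    refine if_congr ?_ rfl rfl
    rw [mem_bdry]
    constructor
    · exact fun h => h.2.2
    · exact fun h => ⟨hpA, hp, h⟩
  have i2 : (if q ∈ bdry E T A then 1 else 0) = (if adjS E A q then 1 else 0) := by
    refine if_congr ?_ rfl rfl
    rw [mem_bdry]
    constructor
    · exact fun h => h.2.2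
    · exact fun h => ⟨hqA, hq, h⟩
  have i3 : (if p ∈ bdry (contractE E p q) T A then 1 else 0)
      = (if adjS (contractE E p q) A p then 1 else 0) := by
    refine if_congr ?_ rfl rfl
    rw [mem_bdry]
    constructor
    · exact fun h => h.2.2
    · exact fun h => ⟨hpA, hp, h⟩
  rw [i1, i2] at m1
  rw [i3, if_neg hqG] at m2
  have hcardeq : ((bdry E T A) \ {p, q}).card
      = ((bdry (contractE E p q) T A) \ {p, q}).card := by rw [hsd]
  have hf1 : fE E T A = (bdry E T A).card + cnt (crossP T A) E := rfl
  have hf2 : fE (contractE E p q) T A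
      = (bdry (contractE E p q) T A).card + cnt (crossP T A) (contractE E p q) := rfl
  omega

lemma fE_contract_le_none (hpq : p ≠ q) (hp : p ∉ T) (hq : q ∉ T)
    {A : Finset V} (hpA : p ∉ A) (hqA : q ∉ A) :
    fE (contractE E p q) T A ≤ fE E T A := by
  have heq := fE_contract_none_eq (E := E) (T := T) hpq hp hq hpA hqA
  have hiff := adjS_contract_p_iff (E := E) hpq hpA hqA
  by_cases h1 : adjS E A p <;> by_cases h2 : adjS E A q
  · have h3 : adjS (contractE E p q) A p := hiff.2 (Or.inl h1)
    rw [if_pos h1, if_pos h2, if_pos h3] at heq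
    omega
  · have h3 : adjS (contractE E p q) A p := hiff.2 (Or.inl h1)
    rw [if_pos h1, if_neg h2, if_pos h3] at heq
    omega
  · have h3 : adjS (contractE E p q) A p := hiff.2 (Or.inr h2)
    rw [if_neg h1, if_pos h2, if_pos h3] at heq
    omega
  · have h3 : ¬ adjS (contractE E p q) A p := fun hc => by
      rcases hiff.1 hc with hcc | hcc
      · exact h1 hcc
      · exact h2 hcc
    rw [if_neg h1, if_neg h2, if_neg h3] at heq
    omega

lemma fE_insert_isolated {E' : Multiset (Sym2 V)} {T : Set V} {z : V}
    (hz : ∀ e ∈ E', z ∉ e) (A : Finset V) :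
    fE E' T (insert z A) = fE E' T A := by
  have hadj : ∀ w, adjS E' (insert z A) w ↔ adjS E' A w := by
    intro w
    constructor
    · rintro ⟨a, ha, he⟩
      rcases Finset.mem_insert.1 ha with rfl | ha'
      · exact absurd (Sym2.mem_mk_left a w) (hz _ he)
      · exact ⟨a, ha', he⟩
    · rintro ⟨a, ha, he⟩
      exact ⟨a, Finset.mem_insert_of_mem ha, he⟩
  have hadjz : ¬ adjS E' A z := by
    rintro ⟨a, ha, he⟩
    exact hz _ he (Sym2.mem_mk_right a z)
  have hbd : bdry E' T (insert z A) = bdry E' T A := by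
    ext w
    rw [mem_bdry, mem_bdry]
    by_cases hwz : w = z
    · subst hwz
      constructor
      · rintro ⟨h1, _, _⟩
        exact absurd (Finset.mem_insert_self w A) h1
      · rintro ⟨_, _, h3⟩
        exact absurd h3 hadjz
    · have : w ∉ insert z A ↔ w ∉ A := by
        rw [Finset.mem_insert]
        constructor
        · intro h hw
          exact h (Or.inr hw)
        · rintro h (rfl | hw)
          · exact hwz rfl
          · exact h hw
      rw [this, hadj]
  have hcross : cnt (crossP T (insert z A)) E' = cnt (crossP T A) E' := by
    refine cnt_eq_of_iff _ _ _ ?_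
    intro e he
    induction e using Sym2.ind with
    | _ x y =>
      have hx : x ≠ z := fun hc => hz _ he (hc ▸ Sym2.mem_mk_left x y)
      have hy : y ≠ z := fun hc => hz _ he (hc ▸ Sym2.mem_mk_right x y)
      rw [crossP_pair, crossP_pair]
      have hxi : x ∈ insert z A ↔ x ∈ A := by
        rw [Finset.mem_insert]
        exact ⟨fun h => h.resolve_left hx, Or.inr⟩
      have hyi : y ∈ insert z A ↔ y ∈ A := by
        rw [Finset.mem_insert]
        exact ⟨fun h => h.resolve_left hy, Or.inr⟩
      rw [hxi, hyi]
  have hf1 : fE E' T (insert z A) = (bdry E' T (insert z A)).card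
      + cnt (crossP T (insert z A)) E' := rfl
  have hf2 : fE E' T A = (bdry E' T A).card + cnt (crossP T A) E' := rfl
  rw [hf1, hf2, hbd, hcross]

lemma no_q_in_contract (hpq : p ≠ q) : ∀ e ∈ contractE E p q, q ∉ e := by
  intro e he
  obtain ⟨⟨e', he', hmap⟩, _⟩ := mem_contractE.1 he
  intro hqe
  subst hmap
  obtain ⟨a, _, ha2⟩ := Sym2.mem_map.1 hqe
  exact collapse_ne_q hpq a ha2

lemma bdry_contract_eq (hpq : p ≠ q) (hp : p ∉ T) (hq : q ∉ T)
    {R : Finset V} (hpR : p ∉ R) (hqR : q ∉ R) (hadjp : adjS E R p) :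
    bdry (contractE E p q) T R = (bdry E T R).erase q := by
  ext w
  by_cases hwq : w = q
  · subst hwq
    constructor
    · intro h
      exact absurd (mem_bdry.1 h).2.2 (not_adjS_contract_q hpq _)
    · intro h
      exact absurd rfl (Finset.mem_erase.1 h).1
  · rw [Finset.mem_erase, mem_bdry, mem_bdry]
    by_cases hwp : w = p
    · subst hwp
      constructor
      · intro h
        exact ⟨hwq, hpR, hp, hadjp⟩
      · intro h
        exact ⟨hpR, hp, (adjS_contract_p_iff hpq hpR hqR).2 (Or.inl hadjp)⟩
    · by_cases hwR : w ∈ R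
      · constructor
        · rintro ⟨h1, _, _⟩
          exact absurd hwR h1
        · rintro ⟨_, h1, _, _⟩
          exact absurd hwR h1
      · rw [adjS_contract_iff hpq hpR hqR hwR hwp hwq]
        constructor
        · exact fun h => ⟨hwq, h⟩
        · exact fun h => h.2

end Contract

lemma elemConn_erase_le (E : Multiset (Sym2 V)) (e0 : Sym2 V) (T : Set V) {u v : V}
    (hu : u ∈ T) (hne : u ≠ v) :
    elemConn (E.erase e0) T u v ≤ elemConn E T u v := by
  obtain ⟨A, hA1, hA2, hA3⟩ := exists_min_cut E T hu hne
  calc elemConn (E.erase e0) T u v ≤ fE (E.erase e0) T A := elemConn_le_fE _ T A hA1 hA2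
    _ ≤ fE E T A := fE_erase_le E e0 T A
    _ ≤ elemConn E T u v := hA3

lemma elemConn_contract_le (E : Multiset (Sym2 V)) (T : Set V) {p q u v : V}
    (hpq : p ≠ q) (hp : p ∉ T) (hq : q ∉ T) (he : s(p, q) ∈ E)
    (hu : u ∈ T) (hv : v ∈ T) (hne : u ≠ v) :
    elemConn (contractE E p q) T u v ≤ elemConn E T u v := by
  obtain ⟨A, hA1, hA2, hA3⟩ := exists_min_cut E T hu hne
  by_cases hpA : p ∈ A <;> by_cases hqA : q ∈ A
  · calc elemConn (contractE E p q) T u v ≤ fE (contractE E p q) T A :=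
        elemConn_le_fE _ T A hA1 hA2
      _ ≤ fE E T A := fE_contract_le_both hpq hp hq hpA hqA
      _ ≤ elemConn E T u v := hA3
  · have hu' : u ∈ A.erase p := Finset.mem_erase.2 ⟨fun hc => hp (hc ▸ hu), hA1⟩
    have hv' : v ∉ A.erase p := fun hc => hA2 (Finset.mem_of_mem_erase hc)
    calc elemConn (contractE E p q) T u v ≤ fE (contractE E p q) T (A.erase p) :=
        elemConn_le_fE _ T _ hu' hv'
      _ ≤ fE E T A := fE_contract_le_erase_p hpq hp hq he hpA hqA
      _ ≤ elemConn E T u v := hA3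
  · have hu' : u ∈ A.erase q := Finset.mem_erase.2 ⟨fun hc => hq (hc ▸ hu), hA1⟩
    have hv' : v ∉ A.erase q := fun hc => hA2 (Finset.mem_of_mem_erase hc)
    calc elemConn (contractE E p q) T u v ≤ fE (contractE E p q) T (A.erase q) :=
        elemConn_le_fE _ T _ hu' hv'
      _ ≤ fE E T A := fE_contract_le_erase_q hpq hp hq he hqA hpA
      _ ≤ elemConn E T u v := hA3
  · calc elemConn (contractE E p q) T u v ≤ fE (contractE E p q) T A :=
        elemConn_le_fE _ T A hA1 hA2
      _ ≤ fE E T A := fE_contract_le_none hpq hp hq hpA hqA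
      _ ≤ elemConn E T u v := hA3

/-- The final uncrossing contradiction. -/
lemma core (E : Multiset (Sym2 V)) (T : Set V) (p q s t x y : V) (S R Rh : Finset V)
    (he : s(p, q) ∈ E) (hqT : q ∉ T)
    (k l : ℕ) (hk : elemConn E T s t = k) (hl : elemConn E T x y = l)
    (hl' : elemConn E T y x = l)
    (hsS : s ∈ S) (htS : t ∉ S) (hfS : fE E T S ≤ k)
    (hpS : p ∈ S) (hqS : q ∉ S) (hSq : ¬ adjS (E.erase s(p, q)) S q)
    (hxR : x ∈ R) (hyR : y ∉ R) (hfR : fE E T R ≤ l) (hpR : p ∉ R) (hqR : q ∉ R)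
    (hRq : adjS E R q)
    (hyRh : y ∈ Rh) (hxRh : x ∉ Rh) (hfRh : fE E T Rh ≤ l) (hpRh : p ∉ Rh) (hqRh : q ∉ Rh)
    (hRhq : adjS E Rh q)
    (hsRh : s ∈ Rh ↔ s ∉ R) (htRh : t ∈ Rh ↔ t ∉ R) : False := by
  have hSqE : adjS E S q := ⟨p, hpS, he⟩
  have hnoadj : ∀ (B : Finset V), p ∉ B → ¬ adjS E (S ∩ B) q := by
    rintro B hpB ⟨a, ha, hae⟩
    by_cases hqe : s(a, q) = s(p, q)
    · have hap : a = p := by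
        rcases Sym2.eq_iff.1 hqe with ⟨h1, _⟩ | ⟨h1, h2⟩
        · exact h1
        · exact absurd ((Finset.mem_inter.1 ha).1) (h1 ▸ hqS)
      exact hpB (hap ▸ (Finset.mem_inter.1 ha).2)
    · exact hSq ⟨a, (Finset.mem_inter.1 ha).1, (Multiset.mem_erase_of_ne hqe).2 hae⟩
  have sub1 : fE E T (S ∪ R) + fE E T (S ∩ R) + 1 ≤ k + l := by
    have := fE_submod_strict E T S R q hqS hqR hqT hSqE hRq (hnoadj R hpR)
    omega
  have sub2 : fE E T (S ∪ Rh) + fE E T (S ∩ Rh) + 1 ≤ k + l := by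
    have := fE_submod_strict E T S Rh q hqS hqRh hqT hSqE hRhq (hnoadj Rh hpRh)
    omega
  by_cases ha : x ∈ S <;> by_cases hb : y ∈ S <;> by_cases hc : s ∈ R <;> by_cases hd : t ∈ R
  -- (a,b,c,d) : use (S,Rh) with b ∧ d
  · have q1 : k ≤ fE E T (S ∪ Rh) := hk ▸ elemConn_le_fE E T _
      (Finset.mem_union.2 (Or.inl hsS))
      (fun h => (Finset.mem_union.1 h).elim htS (fun h2 => (htRh.1 h2) hd))
    have q2 : l ≤ fE E T (S ∩ Rh) := hl' ▸ elemConn_le_fE E T _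
      (Finset.mem_inter.2 ⟨hb, hyRh⟩) (fun h => hxRh (Finset.mem_inter.1 h).2)
    omega
  -- (a,b,c,¬d) : use (S,R) with a ∧ ¬d
  · have q1 : k ≤ fE E T (S ∪ R) := hk ▸ elemConn_le_fE E T _
      (Finset.mem_union.2 (Or.inl hsS))
      (fun h => (Finset.mem_union.1 h).elim htS hd)
    have q2 : l ≤ fE E T (S ∩ R) := hl ▸ elemConn_le_fE E T _
      (Finset.mem_inter.2 ⟨ha, hxR⟩) (fun h => hyR (Finset.mem_inter.1 h).2)
    omega
  -- (a,b,¬c,d) : b ∧ d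
  · have q1 : k ≤ fE E T (S ∪ Rh) := hk ▸ elemConn_le_fE E T _
      (Finset.mem_union.2 (Or.inl hsS))
      (fun h => (Finset.mem_union.1 h).elim htS (fun h2 => (htRh.1 h2) hd))
    have q2 : l ≤ fE E T (S ∩ Rh) := hl' ▸ elemConn_le_fE E T _
      (Finset.mem_inter.2 ⟨hb, hyRh⟩) (fun h => hxRh (Finset.mem_inter.1 h).2)
    omega
  -- (a,b,¬c,¬d) : a ∧ ¬d
  · have q1 : k ≤ fE E T (S ∪ R) := hk ▸ elemConn_le_fE E T _
      (Finset.mem_union.2 (Or.inl hsS))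
      (fun h => (Finset.mem_union.1 h).elim htS hd)
    have q2 : l ≤ fE E T (S ∩ R) := hl ▸ elemConn_le_fE E T _
      (Finset.mem_inter.2 ⟨ha, hxR⟩) (fun h => hyR (Finset.mem_inter.1 h).2)
    omega
  -- (a,¬b,c,d) : c ∧ ¬b
  · have q1 : k ≤ fE E T (S ∩ R) := hk ▸ elemConn_le_fE E T _
      (Finset.mem_inter.2 ⟨hsS, hc⟩) (fun h => htS (Finset.mem_inter.1 h).1)
    have q2 : l ≤ fE E T (S ∪ R) := hl ▸ elemConn_le_fE E T _
      (Finset.mem_union.2 (Or.inr hxR))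
      (fun h => (Finset.mem_union.1 h).elim hb hyR)
    omega
  -- (a,¬b,c,¬d) : a ∧ ¬d
  · have q1 : k ≤ fE E T (S ∪ R) := hk ▸ elemConn_le_fE E T _
      (Finset.mem_union.2 (Or.inl hsS))
      (fun h => (Finset.mem_union.1 h).elim htS hd)
    have q2 : l ≤ fE E T (S ∩ R) := hl ▸ elemConn_le_fE E T _
      (Finset.mem_inter.2 ⟨ha, hxR⟩) (fun h => hyR (Finset.mem_inter.1 h).2)
    omega
  -- (a,¬b,¬c,d) : special 1
  · have q1 : l ≤ fE E T (S ∪ R) := hl ▸ elemConn_le_fE E T _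
      (Finset.mem_union.2 (Or.inl ha))
      (fun h => (Finset.mem_union.1 h).elim hb hyR)
    have q2 : l ≤ fE E T (S ∩ R) := hl ▸ elemConn_le_fE E T _
      (Finset.mem_inter.2 ⟨ha, hxR⟩) (fun h => hyR (Finset.mem_inter.1 h).2)
    have q3 : k ≤ fE E T Rh := hk ▸ elemConn_le_fE E T _
      (hsRh.2 hc) (fun h => (htRh.1 h) hd)
    omega
  -- (a,¬b,¬c,¬d) : a ∧ ¬d
  · have q1 : k ≤ fE E T (S ∪ R) := hk ▸ elemConn_le_fE E T _
      (Finset.mem_union.2 (Or.inl hsS))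
      (fun h => (Finset.mem_union.1 h).elim htS hd)
    have q2 : l ≤ fE E T (S ∩ R) := hl ▸ elemConn_le_fE E T _
      (Finset.mem_inter.2 ⟨ha, hxR⟩) (fun h => hyR (Finset.mem_inter.1 h).2)
    omega
  -- (¬a,b,c,d) : b ∧ d
  · have q1 : k ≤ fE E T (S ∪ Rh) := hk ▸ elemConn_le_fE E T _
      (Finset.mem_union.2 (Or.inl hsS))
      (fun h => (Finset.mem_union.1 h).elim htS (fun h2 => (htRh.1 h2) hd))
    have q2 : l ≤ fE E T (S ∩ Rh) := hl' ▸ elemConn_le_fE E T _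
      (Finset.mem_inter.2 ⟨hb, hyRh⟩) (fun h => hxRh (Finset.mem_inter.1 h).2)
    omega
  -- (¬a,b,c,¬d) : special 2
  · have q1 : l ≤ fE E T (S ∪ Rh) := hl' ▸ elemConn_le_fE E T _
      (Finset.mem_union.2 (Or.inr hyRh))
      (fun h => (Finset.mem_union.1 h).elim ha hxRh)
    have q2 : l ≤ fE E T (S ∩ Rh) := hl' ▸ elemConn_le_fE E T _
      (Finset.mem_inter.2 ⟨hb, hyRh⟩) (fun h => hxRh (Finset.mem_inter.1 h).2)
    have q3 : k ≤ fE E T R := hk ▸ elemConn_le_fE E T _ hc hd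
    omega
  -- (¬a,b,¬c,d) : b ∧ d
  · have q1 : k ≤ fE E T (S ∪ Rh) := hk ▸ elemConn_le_fE E T _
      (Finset.mem_union.2 (Or.inl hsS))
      (fun h => (Finset.mem_union.1 h).elim htS (fun h2 => (htRh.1 h2) hd))
    have q2 : l ≤ fE E T (S ∩ Rh) := hl' ▸ elemConn_le_fE E T _
      (Finset.mem_inter.2 ⟨hb, hyRh⟩) (fun h => hxRh (Finset.mem_inter.1 h).2)
    omega
  -- (¬a,b,¬c,¬d) : ¬a ∧ ¬c
  · have q1 : k ≤ fE E T (S ∩ Rh) := hk ▸ elemConn_le_fE E T _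
      (Finset.mem_inter.2 ⟨hsS, hsRh.2 hc⟩) (fun h => htS (Finset.mem_inter.1 h).1)
    have q2 : l ≤ fE E T (S ∪ Rh) := hl' ▸ elemConn_le_fE E T _
      (Finset.mem_union.2 (Or.inr hyRh))
      (fun h => (Finset.mem_union.1 h).elim ha hxRh)
    omega
  -- (¬a,¬b,c,d) : c ∧ ¬b
  · have q1 : k ≤ fE E T (S ∩ R) := hk ▸ elemConn_le_fE E T _
      (Finset.mem_inter.2 ⟨hsS, hc⟩) (fun h => htS (Finset.mem_inter.1 h).1)
    have q2 : l ≤ fE E T (S ∪ R) := hl ▸ elemConn_le_fE E T _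
      (Finset.mem_union.2 (Or.inr hxR))
      (fun h => (Finset.mem_union.1 h).elim hb hyR)
    omega
  -- (¬a,¬b,c,¬d) : c ∧ ¬b
  · have q1 : k ≤ fE E T (S ∩ R) := hk ▸ elemConn_le_fE E T _
      (Finset.mem_inter.2 ⟨hsS, hc⟩) (fun h => htS (Finset.mem_inter.1 h).1)
    have q2 : l ≤ fE E T (S ∪ R) := hl ▸ elemConn_le_fE E T _
      (Finset.mem_union.2 (Or.inr hxR))
      (fun h => (Finset.mem_union.1 h).elim hb hyR)
    omega
  -- (¬a,¬b,¬c,d) : ¬a ∧ ¬c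
  · have q1 : k ≤ fE E T (S ∩ Rh) := hk ▸ elemConn_le_fE E T _
      (Finset.mem_inter.2 ⟨hsS, hsRh.2 hc⟩) (fun h => htS (Finset.mem_inter.1 h).1)
    have q2 : l ≤ fE E T (S ∪ Rh) := hl' ▸ elemConn_le_fE E T _
      (Finset.mem_union.2 (Or.inr hyRh))
      (fun h => (Finset.mem_union.1 h).elim ha hxRh)
    omega
  -- (¬a,¬b,¬c,¬d) : ¬a ∧ ¬c
  · have q1 : k ≤ fE E T (S ∩ Rh) := hk ▸ elemConn_le_fE E T _
      (Finset.mem_inter.2 ⟨hsS, hsRh.2 hc⟩) (fun h => htS (Finset.mem_inter.1 h).1)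
    have q2 : l ≤ fE E T (S ∪ Rh) := hl' ▸ elemConn_le_fE E T _
      (Finset.mem_union.2 (Or.inr hyRh))
      (fun h => (Finset.mem_union.1 h).elim ha hxRh)
    omega

lemma contract_drop_struct (E : Multiset (Sym2 V)) (T : Set V) (p q x y : V)
    (hpq : p ≠ q) (hp : p ∉ T) (hq : q ∉ T) (he : s(p, q) ∈ E)
    (hxT : x ∈ T) (hyT : y ∈ T) (hxy : x ≠ y)
    (hlt : elemConn (contractE E p q) T x y < elemConn E T x y) :
    ∃ R Rh : Finset V,
      x ∈ R ∧ y ∉ R ∧ fE E T R ≤ elemConn E T x y ∧ p ∉ R ∧ q ∉ R ∧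
        adjS E R q ∧ adjS E R p ∧
      y ∈ Rh ∧ x ∉ Rh ∧ fE E T Rh ≤ elemConn E T x y ∧ p ∉ Rh ∧ q ∉ Rh ∧
        adjS E Rh q ∧ adjS E Rh p ∧
      (∀ z, z ∈ T → (z ∈ Rh ↔ z ∉ R)) := by
  obtain ⟨Fv, Fe, m1, m2, m3, m4⟩ := elemConn_spec (contractE E p q) T x y hxy
  obtain ⟨B0, hB01, hB02, hB03⟩ :=
    exists_fE_le _ T Fv Fe m1 m2 (fun hm => m1 (by exact_mod_cast hm) hxT) m4
  have hB03' : fE (contractE E p q) T B0 ≤ elemConn (contractE E p q) T x y := m3 ▸ hB03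
  have hqx : x ≠ q := fun hc => hq (hc ▸ hxT)
  have hqy : y ≠ q := fun hc => hq (hc ▸ hyT)
  obtain ⟨B, hxB, hyB, hqB, hfB⟩ : ∃ B : Finset V, x ∈ B ∧ y ∉ B ∧ q ∉ B ∧
      fE (contractE E p q) T B ≤ elemConn (contractE E p q) T x y := by
    by_cases hqB0 : q ∈ B0
    · refine ⟨B0.erase q, Finset.mem_erase.2 ⟨hqx, hB01⟩,
        fun hc => hB02 (Finset.mem_of_mem_erase hc), fun hc => (Finset.mem_erase.1 hc).1 rfl, ?_⟩
      have hins : fE (contractE E p q) T B0 = fE (contractE E p q) T (B0.erase q) := by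
        conv_lhs => rw [← Finset.insert_erase hqB0]
        exact fE_insert_isolated (no_q_in_contract hpq) _
      omega
    · exact ⟨B0, hB01, hB02, hqB0, hB03'⟩
  by_cases hpB : p ∈ B
  · exfalso
    have h5 := fE_expand (E := E) (T := T) hpq hp hq hpB hqB
    have h6 : elemConn E T x y ≤ fE E T (insert q B) :=
      elemConn_le_fE E T _ (Finset.mem_insert_of_mem hxB)
        (fun h => (Finset.mem_insert.1 h).elim (fun hc => hqy hc) hyB)
    omega
  · have heq := fE_contract_none_eq (E := E) (T := T) hpq hp hq hpB hqB
    have hlowB : elemConn E T x y ≤ fE E T B := elemConn_le_fE E T B hxB hyB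
    have hiff := adjS_contract_p_iff (E := E) hpq hpB hqB
    have hboth : adjS E B p ∧ adjS E B q ∧ fE E T B ≤ elemConn E T x y := by
      by_cases u1 : adjS E B p <;> by_cases u2 : adjS E B q
      · have u3 : adjS (contractE E p q) B p := hiff.2 (Or.inl u1)
        rw [if_pos u1, if_pos u2, if_pos u3] at heq
        exact ⟨u1, u2, by omega⟩
      · have u3 : adjS (contractE E p q) B p := hiff.2 (Or.inl u1)
        rw [if_pos u1, if_neg u2, if_pos u3] at heq
        omega
      · have u3 : adjS (contractE E p q) B p := hiff.2 (Or.inr u2)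
        rw [if_neg u1, if_pos u2, if_pos u3] at heq
        omega
      · have u3 : ¬ adjS (contractE E p q) B p := fun hcc =>
          (hiff.1 hcc).elim u1 u2
        rw [if_neg u1, if_neg u2, if_neg u3] at heq
        omega
    set D := bdry E T B with hDdef
    set Rh : Finset V := Finset.univ \ (B ∪ D) with hRhdef
    have hqD : q ∈ D := mem_bdry.2 ⟨hqB, hq, hboth.2.1⟩
    have hpD : p ∈ D := mem_bdry.2 ⟨hpB, hp, hboth.1⟩
    have hmemRh : ∀ z, z ∈ Rh ↔ (z ∉ B ∧ z ∉ D) := by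
      intro z
      rw [hRhdef, Finset.mem_sdiff, Finset.mem_union]
      constructor
      · rintro ⟨_, h⟩
        exact ⟨fun hz => h (Or.inl hz), fun hz => h (Or.inr hz)⟩
      · rintro ⟨h1, h2⟩
        exact ⟨Finset.mem_univ _, fun hc => hc.elim h1 h2⟩
    have hcompl := fE_compl (contractE E p q) T B
    have hbdeq := bdry_contract_eq (E := E) hpq hp hq hpB hqB hboth.1
    have hset : Finset.univ \ (B ∪ (D.erase q)) = insert q Rh := by
      ext z
      rw [Finset.mem_sdiff, Finset.mem_union, Finset.mem_insert, Finset.mem_erase]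
      by_cases hzq : z = q
      · subst hzq
        constructor
        · intro _
          exact Or.inl rfl
        · intro _
          exact ⟨Finset.mem_univ _, fun hc => hc.elim hqB (fun h2 => h2.1 rfl)⟩
      · constructor
        · rintro ⟨_, h⟩
          refine Or.inr ((hmemRh z).2 ⟨fun hz => h (Or.inl hz), fun hz => h (Or.inr ⟨hzq, hz⟩)⟩)
        · rintro (hc | hc)
          · exact absurd hc hzq
          · obtain ⟨h1, h2⟩ := (hmemRh z).1 hc
            exact ⟨Finset.mem_univ _, fun hh => hh.elim h1 (fun h3 => h2 h3.2)⟩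
    rw [hbdeq] at hcompl
    rw [hset] at hcompl
    rw [fE_insert_isolated (no_q_in_contract hpq) Rh] at hcompl
    have hpRh : p ∉ Rh := fun hc => ((hmemRh p).1 hc).2 hpD
    have hqRh : q ∉ Rh := fun hc => ((hmemRh q).1 hc).2 hqD
    have hyRh : y ∈ Rh := (hmemRh y).2 ⟨hyB, fun hc => (mem_bdry.1 hc).2.1 hyT⟩
    have hxRh : x ∉ Rh := fun hc => ((hmemRh x).1 hc).1 hxB
    have hcomm : elemConn E T y x = elemConn E T x y := elemConn_comm E T y x
    have hlowRh : elemConn E T x y ≤ fE E T Rh := by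
      rw [← hcomm]
      exact elemConn_le_fE E T Rh hyRh hxRh
    have heqRh := fE_contract_none_eq (E := E) (T := T) hpq hp hq hpRh hqRh
    have hiffRh := adjS_contract_p_iff (E := E) hpq hpRh hqRh
    have hbothRh : adjS E Rh p ∧ adjS E Rh q ∧ fE E T Rh ≤ elemConn E T x y := by
      by_cases u1 : adjS E Rh p <;> by_cases u2 : adjS E Rh q
      · have u3 : adjS (contractE E p q) Rh p := hiffRh.2 (Or.inl u1)
        rw [if_pos u1, if_pos u2, if_pos u3] at heqRh
        exact ⟨u1, u2, by omega⟩
      · have u3 : adjS (contractE E p q) Rh p := hiffRh.2 (Or.inl u1)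
        rw [if_pos u1, if_neg u2, if_pos u3] at heqRh
        omega
      · have u3 : adjS (contractE E p q) Rh p := hiffRh.2 (Or.inr u2)
        rw [if_neg u1, if_pos u2, if_pos u3] at heqRh
        omega
      · have u3 : ¬ adjS (contractE E p q) Rh p := fun hcc =>
          (hiffRh.1 hcc).elim u1 u2
        rw [if_neg u1, if_neg u2, if_neg u3] at heqRh
        omega
    refine ⟨B, Rh, hxB, hyB, hboth.2.2, hpB, hqB, hboth.2.1, hboth.1,
      hyRh, hxRh, hbothRh.2.2, hpRh, hqRh, hbothRh.2.1, hbothRh.1, ?_⟩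
    intro z hz
    rw [hmemRh z]
    constructor
    · exact fun h => h.1
    · intro h
      exact ⟨h, fun hc => (mem_bdry.1 hc).2.1 hz⟩

end CK

/-- **Chekuri–Korula reduction theorem.** For an edge `pq` between two non-terminals,
deleting `pq` or contracting `pq` preserves the element-connectivity between every
pair of distinct terminals. -/
theorem elemConn_delete_or_contract {V : Type*} [Fintype V] [DecidableEq V]
    (E : Multiset (Sym2 V)) (T : Set V) (hloop : ∀ e ∈ E, ¬ e.IsDiag)
    (p q : V) (hp : p ∉ T) (hq : q ∉ T) (hpq : p ≠ q) (he : s(p, q) ∈ E) :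
    (∀ u ∈ T, ∀ v ∈ T, u ≠ v →
        elemConn (E.erase s(p, q)) T u v = elemConn E T u v) ∨
    (∀ u ∈ T, ∀ v ∈ T, u ≠ v →
        elemConn (contractE E p q) T u v = elemConn E T u v) := by
  classical
  by_contra hcon
  push_neg at hcon
  obtain ⟨hcon1, hcon2⟩ := hcon
  obtain ⟨s, hsT, t, htT, hst, hne1⟩ := hcon1
  obtain ⟨x, hxT, y, hyT, hxy, hne2⟩ := hcon2
  have hlt1 : elemConn (E.erase s(p, q)) T s t < elemConn E T s t :=
    lt_of_le_of_ne (CK.elemConn_erase_le E _ T hsT hst) hne1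
  have hlt2 : elemConn (contractE E p q) T x y < elemConn E T x y :=
    lt_of_le_of_ne (CK.elemConn_contract_le E T hpq hp hq he hxT hyT hxy) hne2
  -- extract the S-structure from the deletion drop
  obtain ⟨Fv, Fe, g1, g2, g3, g4⟩ := CK.elemConn_spec (E.erase s(p, q)) T s t hst
  obtain ⟨S, hS1, hS2, hS3⟩ :=
    CK.exists_fE_le _ T Fv Fe g1 g2 (fun hm => g1 (by exact_mod_cast hm) hsT) g4
  have hS4 : CK.fE (E.erase s(p, q)) T S ≤ elemConn (E.erase s(p, q)) T s t := g3 ▸ hS3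
  have hlowS : elemConn E T s t ≤ CK.fE E T S := CK.elemConn_le_fE E T S hS1 hS2
  have hupS : CK.fE E T S ≤ CK.fE (E.erase s(p, q)) T S + 1 :=
    CK.fE_le_erase_add_one hp hq
  have hfS : CK.fE E T S ≤ elemConn E T s t := by omega
  have hltS : CK.fE (E.erase s(p, q)) T S < CK.fE E T S := by omega
  have hstruct := CK.erase_drop_struct hp hq hltS
  -- extract the R-structures from the contraction drop
  obtain ⟨R, Rh, c1, c2, c3, c4, c5, c6, c7, c8, c9, c10, c11, c12, c13, c14, c15⟩ :=
    CK.contract_drop_struct E T p q x y hpq hp hq he hxT hyT hxy hlt2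
  rcases hstruct with ⟨d1, d2, d3⟩ | ⟨d1, d2, d3⟩
  · exact CK.core E T p q s t x y S R Rh he hq
      (elemConn E T s t) (elemConn E T x y) rfl rfl (CK.elemConn_comm E T y x)
      hS1 hS2 hfS d1 d2 d3
      c1 c2 c3 c4 c5 c6
      c8 c9 c10 c11 c12 c13
      (c15 s hsT) (c15 t htT)
  · have he' : s(q, p) ∈ E := Sym2.eq_swap ▸ he
    have d3' : ¬ CK.adjS (E.erase s(q, p)) S p := by
      have hswap : s(q, p) = s(p, q) := Sym2.eq_swap
      rw [hswap]
      exact d3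
    exact CK.core E T q p s t x y S R Rh he' hp
      (elemConn E T s t) (elemConn E T x y) rfl rfl (CK.elemConn_comm E T y x)
      hS1 hS2 hfS d1 d2 d3'
      c1 c2 c3 c5 c4 c7
      c8 c9 c10 c12 c11 c14
      (c15 s hsT) (c15 t htT)

end
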